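/- arXiv:1909.09010 — 3 statements merged into one kernel-verified Lean document; each statement's English description precedes it below -/
import Mathlib

section
/- Let f : R^d → R be m-strongly convex with L-Lipschitz gradient and minimizer θ_*. Consider n workers running the simple MA algorithm: at each step t, θ̄_t = (1/n)Σ_{j=1}^n θ_t^j and θ_{t+1}^i = θ̄_t − α·(∇f(θ̄_t) + ξ_{t,i}), where the noises ξ_{t,i} are independent with zero mean and E[‖ξ_{t,i}‖²] ≤ σ², and 0 < α ≤ 2/(m+L). Then E[Σ_{i=1}^n ‖θ_{t+1}^i − θ_*‖²] ≤ (1 − 2α·mL/(m+L))·E[Σ_{i=1}^n ‖θ_t^i − θ_*‖²] + n·α²·σ². -/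
open scoped RealInnerProductSpace
open MeasureTheory ProbabilityTheory

section AuxMA

variable {E : Type*} [NormedAddCommGroup E] [InnerProductSpace ℝ E] [CompleteSpace E]

lemma aux_line_hasDerivAt (f : E → ℝ) (g : E → E) (hgrad : ∀ x, HasGradientAt f (g x) x)
    (x y : E) (t : ℝ) :
    HasDerivAt (fun s : ℝ => f (x + s • (y - x))) ⟪g (x + t • (y - x)), y - x⟫ t := by
  have hc : HasDerivAt (fun s : ℝ => x + s • (y - x)) (y - x) t := by
    simpa using ((hasDerivAt_id t).smul_const (y - x)).const_add x
  have hf := (hasGradientAt_iff_hasFDerivAt.mp (hgrad (x + t • (y - x)))).comp_hasDerivAt t hc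
  simpa [InnerProductSpace.toDual_apply_apply, Function.comp_def] using hf

lemma aux_descent {L : ℝ} (hL : 0 ≤ L) (f : E → ℝ) (g : E → E)
    (hgrad : ∀ x, HasGradientAt f (g x) x)
    (hlip : ∀ x y, ‖g x - g y‖ ≤ L * ‖x - y‖) (x y : E) :
    f y ≤ f x + ⟪g x, y - x⟫ + L / 2 * ‖y - x‖ ^ 2 := by
  have hg_cont : Continuous g := by
    refine (LipschitzWith.of_dist_le_mul (K := Real.toNNReal L) (f := g) ?_).continuous
    intro a b
    rw [dist_eq_norm, dist_eq_norm, Real.coe_toNNReal L hL]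
    exact hlip a b
  set c : ℝ → E := fun s => x + s • (y - x) with hcdef
  have hc_cont : Continuous c := by
    exact continuous_const.add (continuous_id.smul continuous_const)
  have hcont : Continuous fun t : ℝ => ⟪g (c t), y - x⟫ :=
    (hg_cont.comp hc_cont).inner continuous_const
  have hInt : IntervalIntegrable (fun t => ⟪g (c t), y - x⟫) volume 0 1 :=
    hcont.intervalIntegrable _ _
  have hFTC := intervalIntegral.integral_eq_sub_of_hasDerivAt
    (f := fun s => f (c s)) (f' := fun t => ⟪g (c t), y - x⟫)
    (fun t _ => aux_line_hasDerivAt f g hgrad x y t) hInt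
  have h1 : c 1 = y := by simp only [hcdef, one_smul]; abel
  have h0 : c 0 = x := by simp [hcdef]
  simp only [h1, h0] at hFTC
  have hI2 : IntervalIntegrable (fun t : ℝ => t * (L * ‖y - x‖ ^ 2)) volume 0 1 :=
    (by continuity : Continuous fun t : ℝ => t * (L * ‖y - x‖ ^ 2)).intervalIntegrable _ _
  have hI3 : IntervalIntegrable (fun t : ℝ => ⟪g x, y - x⟫ + t * (L * ‖y - x‖ ^ 2)) volume 0 1 :=
    intervalIntegrable_const.add hI2
  have hb : ∫ t in (0:ℝ)..1, ⟪g (c t), y - x⟫ ≤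
      ∫ t in (0:ℝ)..1, (⟪g x, y - x⟫ + t * (L * ‖y - x‖ ^ 2)) := by
    apply intervalIntegral.integral_mono_on (by norm_num) hInt
    · exact hI3
    · intro t ht
      obtain ⟨ht0, ht1⟩ := ht
      have hcs : ⟪g (c t) - g x, y - x⟫ ≤ ‖g (c t) - g x‖ * ‖y - x‖ := real_inner_le_norm _ _
      have h2 : ‖g (c t) - g x‖ ≤ L * (t * ‖y - x‖) := by
        have := hlip (c t) x
        have hct : c t - x = t • (y - x) := by simp [hcdef]
        rw [hct, norm_smul, Real.norm_eq_abs, abs_of_nonneg ht0] at this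
        linarith [this]
      have hsplit : ⟪g (c t), y - x⟫ = ⟪g x, y - x⟫ + ⟪g (c t) - g x, y - x⟫ := by
        rw [inner_sub_left]; ring
      have hnn : (0:ℝ) ≤ ‖y - x‖ := norm_nonneg _
      nlinarith [hnn]
  have hrhs : ∫ t in (0:ℝ)..1, (⟪g x, y - x⟫ + t * (L * ‖y - x‖ ^ 2)) =
      ⟪g x, y - x⟫ + L / 2 * ‖y - x‖ ^ 2 := by
    rw [intervalIntegral.integral_add intervalIntegrable_const hI2,
      intervalIntegral.integral_const, intervalIntegral.integral_mul_const, integral_id]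
    simp only [smul_eq_mul]
    ring
  rw [hrhs] at hb
  linarith [hFTC, hb]


lemma aux_key {m L : ℝ} (hm : 0 < m) (hmL : m ≤ L) (f : E → ℝ) (g : E → E)
    (hsc : ∀ x y, f y ≥ f x + ⟪g x, y - x⟫ + (m / 2) * ‖y - x‖ ^ 2)
    (hdesc : ∀ x y, f y ≤ f x + ⟪g x, y - x⟫ + L / 2 * ‖y - x‖ ^ 2)
    (hlip : ∀ x y, ‖g x - g y‖ ≤ L * ‖x - y‖)
    (x y : E) :
    m * L * ‖x - y‖ ^ 2 + ‖g x - g y‖ ^ 2 ≤ (m + L) * ⟪g x - g y, x - y⟫ := by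
  have hmono : ∀ a b : E, m * ‖a - b‖ ^ 2 ≤ ⟪g a - g b, a - b⟫ := by
    intro a b
    have h1 := hsc a b
    have h2 := hsc b a
    have e : ‖b - a‖ = ‖a - b‖ := norm_sub_rev _ _
    have i1 : ⟪g a, b - a⟫ = -⟪g a, a - b⟫ := by
      rw [show b - a = -(a - b) by abel, inner_neg_right]
    have i2 : ⟪g a - g b, a - b⟫ = ⟪g a, a - b⟫ - ⟪g b, a - b⟫ := inner_sub_left _ _ _
    rw [e] at h1
    nlinarith [h1, h2, i1, i2]
  rcases eq_or_lt_of_le hmL with rfl | hlt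
  · -- L = m case
    have h1 := hmono x y
    have h2 := hlip x y
    nlinarith [norm_nonneg (g x - g y), norm_nonneg (x - y), h1, h2]
  · -- m < L
    have hLm : (0:ℝ) < L - m := by linarith
    set G : E → E := fun z => g z - m • z with hG
    have hGsub : ∀ a b : E, G a - G b = (g a - g b) - m • (a - b) := by
      intro a b; simp only [hG, smul_sub]; abel
    have hsm : ∀ w : E, ‖m • w‖ ^ 2 = m ^ 2 * ‖w‖ ^ 2 := by
      intro w; rw [norm_smul, Real.norm_eq_abs, mul_pow, sq_abs]
    have e1 : ∀ a b : E, ‖b - a‖ ^ 2 = ‖b‖ ^ 2 - 2 * ⟪a, b⟫ + ‖a‖ ^ 2 := by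
      intro a b
      have h := norm_sub_sq_real b a
      rwa [real_inner_comm a b] at h
    have e2 : ∀ a b : E, ⟪G a, b - a⟫ = ⟪g a, b - a⟫ - m * ⟪a, b⟫ + m * ‖a‖ ^ 2 := by
      intro a b
      simp only [hG, inner_sub_left, real_inner_smul_left, inner_sub_right,
        real_inner_self_eq_norm_sq]
      ring
    have hconv : ∀ a b : E, (f a - m / 2 * ‖a‖ ^ 2) + ⟪G a, b - a⟫ ≤ f b - m / 2 * ‖b‖ ^ 2 := by
      intro a b
      have h1 := hsc a b
      have em : m * ‖b - a‖ ^ 2 = m * (‖b‖ ^ 2 - 2 * ⟪a, b⟫ + ‖a‖ ^ 2) := by rw [e1 a b]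
      have h2 := e2 a b
      linarith
    have hdesc' : ∀ a b : E, f b - m / 2 * ‖b‖ ^ 2 ≤
        (f a - m / 2 * ‖a‖ ^ 2) + ⟪G a, b - a⟫ + (L - m) / 2 * ‖b - a‖ ^ 2 := by
      intro a b
      have h1 := hdesc a b
      have em : m * ‖b - a‖ ^ 2 = m * (‖b‖ ^ 2 - 2 * ⟪a, b⟫ + ‖a‖ ^ 2) := by rw [e1 a b]
      have eL : L * ‖b - a‖ ^ 2 = L * (‖b‖ ^ 2 - 2 * ⟪a, b⟫ + ‖a‖ ^ 2) := by rw [e1 a b]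
      have h2 := e2 a b
      linarith
    have hB : ∀ a b : E, (f a - m / 2 * ‖a‖ ^ 2) + ⟪G a, b - a⟫ +
        (1 / (2 * (L - m))) * ‖G a - G b‖ ^ 2 ≤ f b - m / 2 * ‖b‖ ^ 2 := by
      intro a b
      set k : ℝ := 1 / (L - m) with hk
      set z : E := b - k • (G b - G a) with hz
      have c1 := hconv a z
      have c2 := hdesc' b z
      have za : z - a = (b - a) - k • (G b - G a) := by rw [hz]; abel
      have zb : z - b = -(k • (G b - G a)) := by rw [hz]; abel
      have ia : ⟪G a, z - a⟫ = ⟪G a, b - a⟫ - k * ⟪G a, G b - G a⟫ := by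
        rw [za, inner_sub_right, real_inner_smul_right]
      have ib : ⟪G b, z - b⟫ = -(k * ⟪G b, G b - G a⟫) := by
        rw [zb, inner_neg_right, real_inner_smul_right]
      have nb : ‖z - b‖ ^ 2 = k ^ 2 * ‖G b - G a‖ ^ 2 := by
        rw [zb, norm_neg, norm_smul, Real.norm_eq_abs, mul_pow, sq_abs]
      have isub : ⟪G b, G b - G a⟫ - ⟪G a, G b - G a⟫ = ‖G b - G a‖ ^ 2 := by
        rw [← inner_sub_left, real_inner_self_eq_norm_sq]
      have nrev : ‖G a - G b‖ = ‖G b - G a‖ := norm_sub_rev _ _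
      have hk2 : (L - m) / 2 * k ^ 2 = k / 2 := by
        field_simp [hk]
        have hLk : (L - m) * k = 1 := by rw [hk]; exact mul_one_div_cancel hLm.ne'
        linear_combination k * hLk
      have hkk : k = 1 / (L - m) := hk
      rw [ia] at c1
      rw [ib, nb] at c2
      have isubk : k * ⟪G b, G b - G a⟫ - k * ⟪G a, G b - G a⟫ = k * ‖G b - G a‖ ^ 2 := by
        rw [← mul_sub, isub]
      have hk2' := congrArg (· * ‖G b - G a‖ ^ 2) hk2
      have : (f a - m / 2 * ‖a‖ ^ 2) + ⟪G a, b - a⟫ + (k / 2) * ‖G b - G a‖ ^ 2 ≤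
          f b - m / 2 * ‖b‖ ^ 2 := by linarith [c1, c2, isubk, hk2']
      calc (f a - m / 2 * ‖a‖ ^ 2) + ⟪G a, b - a⟫ + (1 / (2 * (L - m))) * ‖G a - G b‖ ^ 2
          = (f a - m / 2 * ‖a‖ ^ 2) + ⟪G a, b - a⟫ + (k / 2) * ‖G b - G a‖ ^ 2 := by
            have hc3 : 1 / (2 * (L - m)) = k / 2 := by
              rw [hkk]; field_simp
            rw [nrev, hc3]
        _ ≤ f b - m / 2 * ‖b‖ ^ 2 := this
    -- cocoercivity
    have hx := hB x y
    have hy := hB y x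
    have nrev : ‖G y - G x‖ = ‖G x - G y‖ := norm_sub_rev _ _
    have i1 : ⟪G y, x - y⟫ = -⟪G y, y - x⟫ := by
      rw [show x - y = -(y - x) by abel, inner_neg_right]
    have i2 : ⟪G x - G y, x - y⟫ = ⟪G x, x - y⟫ - ⟪G y, x - y⟫ := inner_sub_left _ _ _
    have i3 : ⟪G x, y - x⟫ = -⟪G x, x - y⟫ := by
      rw [show y - x = -(x - y) by abel, inner_neg_right]
    have hco : (1 / (L - m)) * ‖G x - G y‖ ^ 2 ≤ ⟪G x - G y, x - y⟫ := by
      rw [nrev] at hy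
      have h12 : 1 / (2 * (L - m)) * ‖G x - G y‖ ^ 2 + 1 / (2 * (L - m)) * ‖G x - G y‖ ^ 2
          = 1 / (L - m) * ‖G x - G y‖ ^ 2 := by
        rw [← add_mul]
        have hne : L - m ≠ 0 := ne_of_gt hLm
        have hs : 1 / (2 * (L - m)) + 1 / (2 * (L - m)) = 1 / (L - m) := by
          rw [← add_div, div_eq_div_iff (by positivity : (0:ℝ) < 2*(L-m)).ne' hLm.ne']
          ring
        rw [hs]
      linarith [hx, hy, i1, i2, i3, h12]
    -- translate back
    have hGs := hGsub x y
    have iG : ⟪G x - G y, x - y⟫ = ⟪g x - g y, x - y⟫ - m * ‖x - y‖ ^ 2 := by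
      rw [hGs, inner_sub_left, real_inner_smul_left, real_inner_self_eq_norm_sq]
    have nG : ‖G x - G y‖ ^ 2 = ‖g x - g y‖ ^ 2 - 2 * m * ⟪g x - g y, x - y⟫
        + m ^ 2 * ‖x - y‖ ^ 2 := by
      rw [hGs, @norm_sub_sq_real, real_inner_smul_right, hsm]
      ring
    rw [iG, nG] at hco
    have hmul : ‖g x - g y‖ ^ 2 - 2 * m * ⟪g x - g y, x - y⟫ + m ^ 2 * ‖x - y‖ ^ 2 ≤
        (L - m) * (⟪g x - g y, x - y⟫ - m * ‖x - y‖ ^ 2) := by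
      have h := mul_le_mul_of_nonneg_left hco (le_of_lt hLm)
      calc ‖g x - g y‖ ^ 2 - 2 * m * ⟪g x - g y, x - y⟫ + m ^ 2 * ‖x - y‖ ^ 2
          = (L - m) * ((1 / (L - m)) * (‖g x - g y‖ ^ 2 - 2 * m * ⟪g x - g y, x - y⟫
            + m ^ 2 * ‖x - y‖ ^ 2)) := by field_simp
        _ ≤ (L - m) * (⟪g x - g y, x - y⟫ - m * ‖x - y‖ ^ 2) := h
    linarith [hmul]

end AuxMA

set_option maxHeartbeats 1000000 in
theorem MA_one_step_recursion {d n : ℕ} {m L α σ : ℝ}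
    (hn : 0 < n) (hm : 0 < m) (hmL : m ≤ L) (hα0 : 0 < α) (hα : α ≤ 2 / (m + L)) (hσ : 0 ≤ σ)
    (f : EuclideanSpace ℝ (Fin d) → ℝ) (g : EuclideanSpace ℝ (Fin d) → EuclideanSpace ℝ (Fin d))
    (hgrad : ∀ x, HasGradientAt f (g x) x)
    (hsc : ∀ x y, f y ≥ f x + ⟪g x, y - x⟫ + (m / 2) * ‖y - x‖ ^ 2)
    (hlip : ∀ x y, ‖g x - g y‖ ≤ L * ‖x - y‖)
    (θs : EuclideanSpace ℝ (Fin d)) (hmin : ∀ x, f θs ≤ f x)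
    {Ω : Type*} [MeasureSpace Ω] [IsProbabilityMeasure (ℙ : Measure Ω)]
    (ξ : Fin n → Ω → EuclideanSpace ℝ (Fin d))
    (hindep : iIndepFun ξ ℙ)
    (hint : ∀ i, Integrable (ξ i)) (hint2 : ∀ i, Integrable (fun ω => ‖ξ i ω‖ ^ 2))
    (hmean : ∀ i, ∫ ω, ξ i ω = 0) (hvar : ∀ i, ∫ ω, ‖ξ i ω‖ ^ 2 ≤ σ ^ 2)
    (θ : Fin n → EuclideanSpace ℝ (Fin d)) :
    (∫ ω, ∑ i, ‖((1 / (n : ℝ)) • ∑ j, θ j) -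
        α • (g ((1 / (n : ℝ)) • ∑ j, θ j) + ξ i ω) - θs‖ ^ 2) ≤
      (1 - 2 * α * (m * L / (m + L))) * ∑ i, ‖θ i - θs‖ ^ 2 + (n : ℝ) * α ^ 2 * σ ^ 2 := by
  have hL0 : (0:ℝ) < L := lt_of_lt_of_le hm hmL
  have hmL0 : (0:ℝ) < m + L := by linarith
  set s : ℝ := 1 / (m + L) with hs
  have hs0 : 0 < s := by positivity
  have hs1 : s * (m + L) = 1 := by rw [hs]; field_simp
  have hdiv : m * L / (m + L) = m * L * s := by rw [hs, mul_one_div]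
  have hα2s : α ≤ 2 * s := by rw [hs, mul_one_div]; exact hα
  have hdesc := aux_descent hL0.le f g hgrad hlip
  have hkey := aux_key hm hmL f g hsc hdesc hlip
  -- gradient vanishes at the minimizer
  have gzero : g θs = 0 := by
    have hloc : IsLocalMin f θs := Filter.Eventually.of_forall hmin
    have h0 := hloc.hasFDerivAt_eq_zero (hasGradientAt_iff_hasFDerivAt.mp (hgrad θs))
    have := congrArg (InnerProductSpace.toDual ℝ (EuclideanSpace ℝ (Fin d))).symm h0
    simpa using this
  set θb : EuclideanSpace ℝ (Fin d) := (1 / (n : ℝ)) • ∑ j, θ j with hθb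
  set w : EuclideanSpace ℝ (Fin d) := θb - θs with hw
  set v : EuclideanSpace ℝ (Fin d) := θb - α • g θb - θs with hv
  -- contraction
  have hcontr : ‖v‖ ^ 2 ≤ (1 - 2 * α * (m * L / (m + L))) * ‖w‖ ^ 2 := by
    have hk := hkey θb θs
    rw [gzero, sub_zero] at hk
    have hvw : v = w - α • g θb := by rw [hv, hw]; abel
    have hexp : ‖v‖ ^ 2 = ‖w‖ ^ 2 - (2 * α) * ⟪g θb, w⟫ + α ^ 2 * ‖g θb‖ ^ 2 := by
      rw [hvw, @norm_sub_sq_real, real_inner_smul_right, norm_smul, Real.norm_eq_abs,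
        mul_pow, sq_abs, real_inner_comm]
      ring
    have hknn : 0 ≤ 2 * α * s := by positivity
    have F1 := mul_le_mul_of_nonneg_left hk hknn
    have F5 : 2 * α * (s * (m + L)) * ⟪g θb, θb - θs⟫ = 2 * α * ⟪g θb, θb - θs⟫ := by
      rw [hs1]; ring
    have F3 : α * α ≤ α * (2 * s) := mul_le_mul_of_nonneg_left hα2s hα0.le
    have F4 : (0:ℝ) ≤ ‖g θb‖ ^ 2 := sq_nonneg _
    have F6 : (0:ℝ) ≤ α * s * ‖g θb‖ ^ 2 := by positivity
    rw [hdiv, hexp]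
    have hww : w = θb - θs := hw
    rw [hww]
    nlinarith [F1, F5, F3, F4, F6, sq_nonneg (‖g θb‖)]
  -- averaging
  have havg : (n : ℝ) * ‖w‖ ^ 2 ≤ ∑ i, ‖θ i - θs‖ ^ 2 := by
    have hn' : ((n : ℝ)) ≠ 0 := Nat.cast_ne_zero.mpr hn.ne'
    have hwsum : w = (1 / (n : ℝ)) • ∑ j, (θ j - θs) := by
      rw [hw, hθb, Finset.sum_sub_distrib, smul_sub, Finset.sum_const, Finset.card_univ,
        Fintype.card_fin, ← Nat.cast_smul_eq_nsmul ℝ, smul_smul, one_div,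
        inv_mul_cancel₀ hn', one_smul]
    have h1 : ‖w‖ ^ 2 = (1 / (n : ℝ)) ^ 2 * ‖∑ j, (θ j - θs)‖ ^ 2 := by
      rw [hwsum, norm_smul, Real.norm_eq_abs, mul_pow, sq_abs]
    have h2 : ‖∑ j, (θ j - θs)‖ ≤ ∑ j, ‖θ j - θs‖ := norm_sum_le _ _
    have h3 : ‖∑ j, (θ j - θs)‖ ^ 2 ≤ (∑ j, ‖θ j - θs‖) ^ 2 :=
      pow_le_pow_left₀ (norm_nonneg _) h2 2
    have h4 : (∑ j, ‖θ j - θs‖) ^ 2 ≤ (n : ℝ) * ∑ j, ‖θ j - θs‖ ^ 2 := by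
      have := sq_sum_le_card_mul_sum_sq (s := (Finset.univ : Finset (Fin n)))
        (f := fun j => ‖θ j - θs‖)
      simpa using this
    have hnpos : (0:ℝ) < (n:ℝ) := Nat.cast_pos.mpr hn
    calc (n : ℝ) * ‖w‖ ^ 2 = (n : ℝ) * (1 / (n : ℝ)) ^ 2 * ‖∑ j, (θ j - θs)‖ ^ 2 := by
          rw [h1]; ring
      _ ≤ (n : ℝ) * (1 / (n : ℝ)) ^ 2 * ((n : ℝ) * ∑ j, ‖θ j - θs‖ ^ 2) := by
          apply mul_le_mul_of_nonneg_left (le_trans h3 h4) (by positivity)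
      _ = ∑ j, ‖θ j - θs‖ ^ 2 := by field_simp
  -- integral computation
  have hrw : ∀ (i : Fin n) (ω : Ω), θb - α • (g θb + ξ i ω) - θs = v - α • ξ i ω := by
    intro i ω
    rw [hv, smul_add]; abel
  have hFexp : ∀ (i : Fin n) (ω : Ω), ‖v - α • ξ i ω‖ ^ 2 =
      ‖v‖ ^ 2 - (2 * α) * ⟪v, ξ i ω⟫ + α ^ 2 * ‖ξ i ω‖ ^ 2 := by
    intro i ω
    rw [@norm_sub_sq_real, real_inner_smul_right, norm_smul, Real.norm_eq_abs, mul_pow, sq_abs]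
    ring
  have hFi : ∀ i : Fin n, Integrable (fun ω => ‖v - α • ξ i ω‖ ^ 2) := by
    intro i
    have : (fun ω => ‖v - α • ξ i ω‖ ^ 2) =
        fun ω => ‖v‖ ^ 2 - (2 * α) * ⟪v, ξ i ω⟫ + α ^ 2 * ‖ξ i ω‖ ^ 2 := funext (hFexp i)
    rw [this]
    exact (((integrable_const _).sub (((hint i).const_inner v).const_mul _)).add
      ((hint2 i).const_mul _))
  have hone : ∀ i : Fin n, (∫ ω, ‖v - α • ξ i ω‖ ^ 2) ≤ ‖v‖ ^ 2 + α ^ 2 * σ ^ 2 := by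
    intro i
    have h1 : (∫ ω, ‖v - α • ξ i ω‖ ^ 2) =
        ∫ ω, (‖v‖ ^ 2 - (2 * α) * ⟪v, ξ i ω⟫ + α ^ 2 * ‖ξ i ω‖ ^ 2) := by
      simp_rw [hFexp]
    have I1 : Integrable (fun ω => (2 * α) * ⟪v, ξ i ω⟫) ℙ := ((hint i).const_inner v).const_mul _
    have I2 : Integrable (fun ω => α ^ 2 * ‖ξ i ω‖ ^ 2) ℙ := (hint2 i).const_mul _
    have I01 : Integrable (fun ω => ‖v‖ ^ 2 - (2 * α) * ⟪v, ξ i ω⟫) ℙ :=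
      (integrable_const _).sub I1
    rw [h1, integral_add I01 I2,
      integral_sub (integrable_const _) I1,
      integral_const, integral_const_mul, integral_const_mul,
      integral_inner (hint i) v, hmean i, inner_zero_right]
    simp only [measure_univ, probReal_univ, ENNReal.toReal_one, one_smul, mul_zero, sub_zero]
    have := hvar i
    nlinarith [sq_nonneg α]
  have hc1 : 0 ≤ 1 - 2 * α * (m * L / (m + L)) := by
    rw [hdiv]
    have h4 : 4 * m * L ≤ (m + L) ^ 2 := by nlinarith [sq_nonneg (m - L)]
    have e5 := mul_le_mul_of_nonneg_right h4 (sq_nonneg s)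
    have e6 : (s * (m + L)) ^ 2 = 1 := by rw [hs1]; norm_num
    have e7 := mul_le_mul_of_nonneg_left hα2s (by positivity : (0:ℝ) ≤ 2 * m * L * s)
    nlinarith [e5, e6, e7]
  calc (∫ ω, ∑ i, ‖θb - α • (g θb + ξ i ω) - θs‖ ^ 2)
      = ∑ i, ∫ ω, ‖v - α • ξ i ω‖ ^ 2 := by
        rw [show (fun ω => ∑ i, ‖θb - α • (g θb + ξ i ω) - θs‖ ^ 2)
            = (fun ω => ∑ i, ‖v - α • ξ i ω‖ ^ 2) from
          funext fun ω => Finset.sum_congr rfl fun i _ => by rw [hrw i ω]]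
        exact integral_finset_sum _ (fun i _ => hFi i)
    _ ≤ ∑ i : Fin n, (‖v‖ ^ 2 + α ^ 2 * σ ^ 2) := Finset.sum_le_sum (fun i _ => hone i)
    _ = (n : ℝ) * ‖v‖ ^ 2 + (n : ℝ) * α ^ 2 * σ ^ 2 := by
        rw [Finset.sum_const, Finset.card_univ, Fintype.card_fin, nsmul_eq_mul]
        ring
    _ ≤ (1 - 2 * α * (m * L / (m + L))) * ∑ i, ‖θ i - θs‖ ^ 2 + (n : ℝ) * α ^ 2 * σ ^ 2 := by
        have step1 : (n : ℝ) * ‖v‖ ^ 2 ≤ (1 - 2 * α * (m * L / (m + L))) * ((n:ℝ) * ‖w‖ ^ 2) := by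
          calc (n : ℝ) * ‖v‖ ^ 2 ≤ (n : ℝ) * ((1 - 2 * α * (m * L / (m + L))) * ‖w‖ ^ 2) :=
              mul_le_mul_of_nonneg_left hcontr (Nat.cast_nonneg n)
            _ = (1 - 2 * α * (m * L / (m + L))) * ((n:ℝ) * ‖w‖ ^ 2) := by ring
        have step2 := mul_le_mul_of_nonneg_left havg hc1
        linarith [step1, step2]
end

section
/- Under the hypotheses of the MA recursion (f m-strongly convex with L-Lipschitz gradient, noise zero-mean with variance ≤ σ², step size 0 < α ≤ 2/(m+L), all workers initialized at θ_0), for all t: E[Σ_{i=1}^n ‖θ_t^i − θ_*‖²] ≤ (1 − 2α·mL/(m+L))^t · n·‖θ_0 − θ_*‖² + n·((m+L)/(2mL))·α·σ². -/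
open scoped RealInnerProductSpace
open MeasureTheory ProbabilityTheory

section Det
variable {d : ℕ}

theorem MA_line_deriv (f : EuclideanSpace ℝ (Fin d) → ℝ) (g : EuclideanSpace ℝ (Fin d) → EuclideanSpace ℝ (Fin d))
    (hgrad : ∀ x, HasGradientAt f (g x) x)
    (y v : EuclideanSpace ℝ (Fin d)) (t : ℝ) :
    HasDerivAt (fun s : ℝ => f (y + s • v)) ⟪g (y + t • v), v⟫ t := by
  have hc : HasDerivAt (fun s : ℝ => y + s • v) v t := by
    simpa using ((hasDerivAt_id t).smul_const v).const_add y
  have hf := (hgrad (y + t • v)).hasFDerivAt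
  have := hf.comp_hasDerivAt t hc
  rw [InnerProductSpace.toDual_apply_apply] at this
  exact this

/-- descent lemma from one-sided Lipschitz-type condition on the gradient -/
theorem MA_descent (f : EuclideanSpace ℝ (Fin d) → ℝ) (g : EuclideanSpace ℝ (Fin d) → EuclideanSpace ℝ (Fin d))
    (hline : ∀ y v : EuclideanSpace ℝ (Fin d), ∀ t : ℝ,
      HasDerivAt (fun s : ℝ => f (y + s • v)) ⟪g (y + t • v), v⟫ t)
    (C : ℝ) (hC : ∀ a b, ⟪g a - g b, a - b⟫ ≤ C * ‖a - b‖ ^ 2)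
    (y z : EuclideanSpace ℝ (Fin d)) :
    f z ≤ f y + ⟪g y, z - y⟫ + C / 2 * ‖z - y‖ ^ 2 := by
  set v := z - y with hv
  set ψ : ℝ → ℝ := fun s => f (y + s • v) - s * ⟪g y, v⟫ - C * s ^ 2 / 2 * ‖v‖ ^ 2 with hψ
  have hder : ∀ s : ℝ, HasDerivAt ψ (⟪g (y + s • v) - g y, v⟫ - C * s * ‖v‖ ^ 2) s := by
    intro s
    have h1 := hline y v s
    have h2 : HasDerivAt (fun s : ℝ => s * ⟪g y, v⟫) ⟪g y, v⟫ s := by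
      simpa using (hasDerivAt_id s).mul_const ⟪g y, v⟫
    have h3 : HasDerivAt (fun s : ℝ => C * s ^ 2 / 2 * ‖v‖ ^ 2) (C * s * ‖v‖ ^ 2) s := by
      have h4 : HasDerivAt (fun s : ℝ => s ^ 2) (2 * s) s := by
        simpa using hasDerivAt_pow 2 s
      have := ((h4.const_mul C).div_const 2).mul_const (‖v‖ ^ 2)
      exact this.congr_deriv (by ring)
    have := (h1.sub h2).sub h3
    exact this.congr_deriv (by rw [inner_sub_left])
  have hmono : AntitoneOn ψ (Set.Icc 0 1) := by
    have hdiff : ∀ s : ℝ, DifferentiableAt ℝ ψ s := fun s => (hder s).differentiableAt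
    refine antitoneOn_of_deriv_nonpos (convex_Icc 0 1) ?_ ?_ ?_
    · exact (Differentiable.continuous fun s => hdiff s).continuousOn
    · exact fun s _ => (hdiff s).differentiableWithinAt
    · intro s hs
      rw [interior_Icc] at hs
      rw [(hder s).deriv]
      have hb : ⟪g (y + s • v) - g y, v⟫ ≤ C * s * ‖v‖ ^ 2 := by
        have h0 : (0:ℝ) < s := hs.1
        have := hC (y + s • v) y
        have hsv : (y + s • v) - y = s • v := by abel
        rw [hsv] at this
        have hinner : ⟪g (y + s • v) - g y, s • v⟫ = s * ⟪g (y + s • v) - g y, v⟫ := by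
          rw [real_inner_smul_right]
        have hnorm : ‖s • v‖ ^ 2 = s ^ 2 * ‖v‖ ^ 2 := by
          rw [norm_smul, Real.norm_eq_abs, mul_pow, sq_abs]
        rw [hinner, hnorm] at this
        nlinarith
      linarith
  have := hmono (Set.left_mem_Icc.2 zero_le_one) (Set.right_mem_Icc.2 zero_le_one) zero_le_one
  simp only [hψ, zero_smul, add_zero, zero_mul, zero_pow, sub_zero, one_smul, one_mul, one_pow] at this
  have hyz : y + v = z := by rw [hv]; abel
  rw [hyz] at this
  nlinarith [this]

/-- Baillon–Haddad-type inequality -/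
theorem MA_BH (f : EuclideanSpace ℝ (Fin d) → ℝ) (g : EuclideanSpace ℝ (Fin d) → EuclideanSpace ℝ (Fin d))
    (hline : ∀ y v : EuclideanSpace ℝ (Fin d), ∀ t : ℝ,
      HasDerivAt (fun s : ℝ => f (y + s • v)) ⟪g (y + t • v), v⟫ t)
    (hconv : ∀ x y, f y ≥ f x + ⟪g x, y - x⟫)
    (C : ℝ) (hCpos : 0 < C) (hC : ∀ a b, ⟪g a - g b, a - b⟫ ≤ C * ‖a - b‖ ^ 2)
    (x y : EuclideanSpace ℝ (Fin d)) :
    f y ≥ f x + ⟪g x, y - x⟫ + 1 / (2 * C) * ‖g y - g x‖ ^ 2 := by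
  set z := y - (1 / C) • (g y - g x) with hz
  have h1 := MA_descent f g hline C hC y z
  have h2 := hconv x z
  have hzy : z - y = -((1 / C) • (g y - g x)) := by rw [hz]; abel
  have hzx : z - x = (y - x) - (1 / C) • (g y - g x) := by rw [hz]; abel
  rw [hzy] at h1
  rw [hzx] at h2
  rw [inner_neg_right, real_inner_smul_right, norm_neg, norm_smul, Real.norm_eq_abs,
    abs_of_pos (by positivity : (0:ℝ) < 1/C)] at h1
  rw [inner_sub_right, real_inner_smul_right] at h2
  have e1 : ⟪g y, g y - g x⟫ - ⟪g x, g y - g x⟫ = ‖g y - g x‖ ^ 2 := by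
    rw [← inner_sub_left, real_inner_self_eq_norm_sq]
  have e2 : 1/C * ⟪g y, g y - g x⟫ - 1/C * ⟪g x, g y - g x⟫ = 1/C * ‖g y - g x‖ ^ 2 := by
    rw [← mul_sub, e1]
  have key : 1/(2*C) * ‖g y - g x‖^2 = 1/C * ‖g y - g x‖^2 - C/2 * (1/C * ‖g y - g x‖)^2 := by
    field_simp
    ring
  linarith [h1, h2, e2, key]

/-- strong cocoercivity -/
theorem MA_coco {m L : ℝ} (hm : 0 < m) (hmL : m ≤ L)
    (f : EuclideanSpace ℝ (Fin d) → ℝ) (g : EuclideanSpace ℝ (Fin d) → EuclideanSpace ℝ (Fin d))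
    (hgrad : ∀ x, HasGradientAt f (g x) x)
    (hsc : ∀ x y, f y ≥ f x + ⟪g x, y - x⟫ + (m / 2) * ‖y - x‖ ^ 2)
    (hlip : ∀ x y, ‖g x - g y‖ ≤ L * ‖x - y‖)
    (x y : EuclideanSpace ℝ (Fin d)) :
    ⟪g x - g y, x - y⟫ ≥ m * L / (m + L) * ‖x - y‖ ^ 2 + 1 / (m + L) * ‖g x - g y‖ ^ 2 := by
  have hL : 0 < L := lt_of_lt_of_le hm hmL
  have hmono : ⟪g x - g y, x - y⟫ ≥ m * ‖x - y‖ ^ 2 := by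
    have h1 := hsc x y
    have h2 := hsc y x
    have e1 : ⟪g x, y - x⟫ = -⟪g x, x - y⟫ := by rw [← inner_neg_right]; congr 1; abel
    have e2 : ‖y - x‖ = ‖x - y‖ := by rw [← norm_neg]; congr 1; abel
    rw [e1, e2] at h1
    rw [inner_sub_left]
    linarith [h1, h2]
  rcases eq_or_lt_of_le hmL with hEq | hlt
  · -- m = L
    subst hEq
    have hle := hlip x y
    have hsq : ‖g x - g y‖ ^ 2 ≤ m^2 * ‖x - y‖ ^ 2 := by nlinarith [norm_nonneg (g x - g y), norm_nonneg (x - y)]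
    have : m * m / (m + m) * ‖x - y‖ ^ 2 + 1 / (m + m) * ‖g x - g y‖ ^ 2 ≤ m * ‖x - y‖ ^ 2 := by
      rw [div_mul_eq_mul_div, div_mul_eq_mul_div, ← add_div, div_le_iff₀ (by positivity)]
      nlinarith
    linarith [hmono]
  · -- m < L : work with h = f - m/2 ‖·‖²
    set gh : EuclideanSpace ℝ (Fin d) → EuclideanSpace ℝ (Fin d) := fun z => g z - m • z with hgh
    set h : EuclideanSpace ℝ (Fin d) → ℝ := fun z => f z - m / 2 * ‖z‖ ^ 2 with hh
    have hline : ∀ y v : EuclideanSpace ℝ (Fin d), ∀ t : ℝ,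
        HasDerivAt (fun s : ℝ => h (y + s • v)) ⟪gh (y + t • v), v⟫ t := by
      intro y v t
      have hc : HasDerivAt (fun s : ℝ => y + s • v) v t := by
        simpa using ((hasDerivAt_id t).smul_const v).const_add y
      have h1 := MA_line_deriv f g hgrad y v t
      have h2 : HasDerivAt (fun s : ℝ => ⟪y + s • v, y + s • v⟫)
          (⟪y + t • v, v⟫ + ⟪v, y + t • v⟫) t := hc.inner ℝ hc
      have h2' := h2.const_mul (m / 2)
      have h3 := h1.sub h2'
      simp only [real_inner_self_eq_norm_sq] at h3
      refine h3.congr_deriv ?_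
      rw [hgh]
      simp only
      rw [inner_sub_left, real_inner_smul_left, real_inner_comm (y + t • v) v]
      ring
    have hconv : ∀ a b, h b ≥ h a + ⟪gh a, b - a⟫ := by
      intro a b
      have h1 := hsc a b
      have e : ⟪gh a, b - a⟫ = ⟪g a, b - a⟫ - m * ⟪a, b - a⟫ := by
        rw [hgh]; simp only
        rw [inner_sub_left, real_inner_smul_left]
      have e2 : ‖b - a‖ ^ 2 = ‖b‖^2 - 2*⟪a,b⟫ + ‖a‖^2 := by
        rw [← real_inner_self_eq_norm_sq, ← real_inner_self_eq_norm_sq, ← real_inner_self_eq_norm_sq]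
        rw [inner_sub_left, inner_sub_right, inner_sub_right, real_inner_comm b a]
        ring
      have e3 : ⟪a, b - a⟫ = ⟪a,b⟫ - ‖a‖^2 := by
        rw [inner_sub_right, real_inner_self_eq_norm_sq]
      rw [hh]; simp only
      rw [e, e3]
      nlinarith [h1, e2]
    have hCgh : ∀ a b, ⟪gh a - gh b, a - b⟫ ≤ (L - m) * ‖a - b‖ ^ 2 := by
      intro a b
      have e : gh a - gh b = (g a - g b) - m • (a - b) := by
        rw [hgh]; simp only
        rw [smul_sub]; abel
      rw [e, inner_sub_left, real_inner_smul_left, real_inner_self_eq_norm_sq]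
      have hcs : ⟪g a - g b, a - b⟫ ≤ L * ‖a - b‖ ^ 2 := by
        calc ⟪g a - g b, a - b⟫ ≤ ‖g a - g b‖ * ‖a - b‖ := real_inner_le_norm _ _
        _ ≤ L * ‖a - b‖ * ‖a - b‖ := by
            apply mul_le_mul_of_nonneg_right (hlip a b) (norm_nonneg _)
        _ = L * ‖a - b‖ ^ 2 := by ring
      linarith
    have hBH1 := MA_BH h gh hline hconv (L - m) (by linarith) hCgh x y
    have hBH2 := MA_BH h gh hline hconv (L - m) (by linarith) hCgh y x
    have hC0 : (0:ℝ) < L - m := by linarith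
    have hs0 : (0:ℝ) < m + L := by linarith
    have hyx : y - x = -(x - y) := by abel
    rw [hyx] at hBH1
    have e1 : ∀ (A B u : EuclideanSpace ℝ (Fin d)), ⟪A, -u⟫ + ⟪B, u⟫ = -⟪A - B, u⟫ := by
      intro A B u
      rw [inner_neg_right, inner_sub_left]; ring
    have e2 : ‖gh y - gh x‖ = ‖gh x - gh y‖ := by rw [← norm_neg]; congr 1; abel
    rw [e2] at hBH1
    have e1' := e1 (gh x) (gh y) (x - y)
    have h2C : 1/(2*(L-m)) + 1/(2*(L-m)) = 1/(L-m) := by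
      rw [← add_div]
      rw [show (2:ℝ) * (L-m) = (L-m) * 2 by ring]
      rw [div_mul_eq_div_div_swap]
      norm_num
    have h2C' : 1/(2*(L-m)) * ‖gh x - gh y‖^2 + 1/(2*(L-m)) * ‖gh x - gh y‖^2
        = 1/(L-m) * ‖gh x - gh y‖^2 := by rw [← add_mul, h2C]
    have hadd : ⟪gh x - gh y, x - y⟫ ≥ 1/(L-m) * ‖gh x - gh y‖^2 := by
      linarith [hBH1, hBH2, e1', h2C']
    have hadd2 : ‖gh x - gh y‖ ^ 2 ≤ (L - m) * ⟪gh x - gh y, x - y⟫ := by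
      rw [ge_iff_le, one_div, inv_mul_le_iff₀ hC0] at hadd
      linarith [hadd]
    have hghd : gh x - gh y = (g x - g y) - m • (x - y) := by
      simp only [hgh]; rw [smul_sub]; abel
    have eA : ⟪gh x - gh y, x - y⟫ = ⟪g x - g y, x - y⟫ - m * ‖x - y‖^2 := by
      rw [hghd, inner_sub_left, real_inner_smul_left, real_inner_self_eq_norm_sq]
    have eB : ‖gh x - gh y‖^2 = ‖g x - g y‖^2 - 2*m*⟪g x - g y, x - y⟫ + m^2*‖x - y‖^2 := by
      rw [hghd, norm_sub_sq_real, real_inner_smul_right, norm_smul, Real.norm_eq_abs,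
        abs_of_pos hm, mul_pow]
      ring
    rw [eA, eB] at hadd2
    have efin : m * L / (m + L) * ‖x - y‖ ^ 2 + 1 / (m + L) * ‖g x - g y‖ ^ 2
        = (m * L * ‖x - y‖ ^ 2 + ‖g x - g y‖ ^ 2) / (m + L) := by ring
    rw [ge_iff_le, efin, div_le_iff₀ hs0]
    nlinarith [hadd2]

theorem MA_grad_zero (f : EuclideanSpace ℝ (Fin d) → ℝ)
    (g : EuclideanSpace ℝ (Fin d) → EuclideanSpace ℝ (Fin d))
    (hgrad : ∀ x, HasGradientAt f (g x) x)
    (θs : EuclideanSpace ℝ (Fin d)) (hmin : ∀ x, f θs ≤ f x) : g θs = 0 := by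
  have hloc : IsLocalMin f θs := Filter.Eventually.of_forall hmin
  have := hloc.hasFDerivAt_eq_zero (hgrad θs).hasFDerivAt
  have h2 : InnerProductSpace.toDual ℝ (EuclideanSpace ℝ (Fin d)) (g θs) = 0 := this
  simpa using congrArg (fun φ => (InnerProductSpace.toDual ℝ (EuclideanSpace ℝ (Fin d))).symm φ) h2

theorem MA_contraction {m L αs : ℝ} (hm : 0 < m) (hmL : m ≤ L)
    (hα0 : 0 < αs) (hα : αs ≤ 2 / (m + L))
    (f : EuclideanSpace ℝ (Fin d) → ℝ) (g : EuclideanSpace ℝ (Fin d) → EuclideanSpace ℝ (Fin d))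
    (hgrad : ∀ x, HasGradientAt f (g x) x)
    (hsc : ∀ x y, f y ≥ f x + ⟪g x, y - x⟫ + (m / 2) * ‖y - x‖ ^ 2)
    (hlip : ∀ x y, ‖g x - g y‖ ≤ L * ‖x - y‖)
    (θs : EuclideanSpace ℝ (Fin d)) (hmin : ∀ x, f θs ≤ f x)
    (x : EuclideanSpace ℝ (Fin d)) :
    ‖x - αs • g x - θs‖ ^ 2 ≤ (1 - 2 * αs * (m * L / (m + L))) * ‖x - θs‖ ^ 2 := by
  have hL : 0 < L := lt_of_lt_of_le hm hmL
  have hs0 : (0:ℝ) < m + L := by linarith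
  have hg0 := MA_grad_zero f g hgrad θs hmin
  have hcoco := MA_coco hm hmL f g hgrad hsc hlip x θs
  rw [hg0, sub_zero] at hcoco
  have hexp : x - αs • g x - θs = (x - θs) - αs • g x := by abel
  rw [hexp, norm_sub_sq_real, real_inner_smul_right, norm_smul, Real.norm_eq_abs,
    abs_of_pos hα0, mul_pow]
  have hcoef : αs ^ 2 - 2 * αs / (m + L) ≤ 0 := by
    have : αs * (m + L) ≤ 2 := by
      rw [div_eq_mul_inv] at hα
      calc αs * (m + L) ≤ (2 * (m + L)⁻¹) * (m + L) := by
            apply mul_le_mul_of_nonneg_right hα (le_of_lt hs0)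
      _ = 2 := by field_simp
    have h2 : αs ^ 2 * (m + L) ≤ 2 * αs := by nlinarith
    rw [sub_nonpos, div_eq_mul_inv]
    calc αs ^ 2 = (αs ^ 2 * (m + L)) * (m + L)⁻¹ := by field_simp
    _ ≤ (2 * αs) * (m + L)⁻¹ := by
        apply mul_le_mul_of_nonneg_right h2 (le_of_lt (inv_pos.2 hs0))
    _ = 2 * αs * (m + L)⁻¹ := by ring
  have hinner : ⟪x - θs, g x⟫ = ⟪g x, x - θs⟫ := real_inner_comm _ _
  rw [hinner]
  have key : ‖x - θs‖ ^ 2 - 2 * αs * ⟪g x, x - θs⟫ + αs ^ 2 * ‖g x‖ ^ 2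
      ≤ (1 - 2 * αs * (m * L / (m + L))) * ‖x - θs‖ ^ 2 := by
    have h1 : ⟪g x, x - θs⟫ ≥ m * L / (m + L) * ‖x - θs‖ ^ 2 + 1 / (m + L) * ‖g x‖ ^ 2 := hcoco
    have h2 : αs ^ 2 * ‖g x‖ ^ 2 - 2 * αs * (1 / (m + L)) * ‖g x‖ ^ 2 ≤ 0 := by
      have := mul_le_mul_of_nonneg_right hcoef (sq_nonneg ‖g x‖)
      calc αs ^ 2 * ‖g x‖ ^ 2 - 2 * αs * (1 / (m + L)) * ‖g x‖ ^ 2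
          = (αs ^ 2 - 2 * αs / (m + L)) * ‖g x‖ ^ 2 := by ring
      _ ≤ 0 := by simpa using this
    nlinarith [mul_le_mul_of_nonneg_left h1.le (by positivity : (0:ℝ) ≤ 2 * αs)]
  linarith [key]
end Det

theorem MA_iIndepFun_congr {Ω ι : Type*} [MeasurableSpace Ω] {μ : Measure Ω}
    {β : ι → Type*} [m : ∀ i, MeasurableSpace (β i)] {f f' : ∀ i, Ω → β i}
    (h : iIndepFun f μ) (hae : ∀ i, f i =ᵐ[μ] f' i) : iIndepFun f' μ := by
  rw [iIndepFun_iff_measure_inter_preimage_eq_mul] at h ⊢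
  intro S sets H
  have hone : ∀ i, (f i ⁻¹' sets i : Set Ω) =ᵐ[μ] (f' i ⁻¹' sets i) := by
    intro i
    rw [Filter.eventuallyEq_set]
    filter_upwards [hae i] with ω hω
    simp only [Set.mem_preimage, hω]
  have hint : (⋂ i ∈ S, f i ⁻¹' sets i : Set Ω) =ᵐ[μ] (⋂ i ∈ S, f' i ⁻¹' sets i) := by
    have hS : ∀ᵐ ω ∂μ, ∀ i ∈ (S : Set ι), f i ω = f' i ω :=
      (MeasureTheory.ae_ball_iff S.countable_toSet).2 fun i _ => hae i
    rw [Filter.eventuallyEq_set]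
    filter_upwards [hS] with ω hω
    simp only [Set.mem_iInter, Set.mem_preimage]
    constructor
    · intro hx i hi; rw [← hω i (Finset.mem_coe.2 hi)]; exact hx i hi
    · intro hx i hi; rw [hω i (Finset.mem_coe.2 hi)]; exact hx i hi
  rw [← measure_congr hint, h S H]
  exact Finset.prod_congr rfl fun i _ => measure_congr (hone i)

theorem MA_avg_sq {d n : ℕ} (hn : 0 < n) (v : Fin n → EuclideanSpace ℝ (Fin d)) :
    ‖(1 / (n:ℝ)) • ∑ j, v j‖ ^ 2 ≤ (1 / (n:ℝ)) * ∑ j, ‖v j‖ ^ 2 := by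
  have hn' : (0:ℝ) < n := Nat.cast_pos.2 hn
  have h1 : ‖(1 / (n:ℝ)) • ∑ j, v j‖ = (1/(n:ℝ)) * ‖∑ j, v j‖ := by
    rw [norm_smul, Real.norm_eq_abs, abs_of_pos (by positivity)]
  have h2 : ‖∑ j, v j‖ ≤ ∑ j, ‖v j‖ := norm_sum_le _ _
  have h3 : (∑ j, ‖v j‖) ^ 2 ≤ (n:ℝ) * ∑ j, ‖v j‖ ^ 2 := by
    have := sq_sum_le_card_mul_sum_sq (s := Finset.univ) (f := fun j => ‖v j‖)
    simpa using this
  rw [h1, mul_pow]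
  calc (1/(n:ℝ))^2 * ‖∑ j, v j‖^2 ≤ (1/(n:ℝ))^2 * ((n:ℝ) * ∑ j, ‖v j‖^2) := by
        apply mul_le_mul_of_nonneg_left _ (by positivity)
        calc ‖∑ j, v j‖^2 ≤ (∑ j, ‖v j‖)^2 := by
              apply pow_le_pow_left₀ (norm_nonneg _) h2
        _ ≤ (n:ℝ) * ∑ j, ‖v j‖^2 := h3
  _ = (1/(n:ℝ)) * ∑ j, ‖v j‖^2 := by field_simp

theorem MA_coord_le {d : ℕ} (x : EuclideanSpace ℝ (Fin d)) (k : Fin d) : |x k| ≤ ‖x‖ := by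
  rw [EuclideanSpace.norm_eq, ← Real.sqrt_sq_eq_abs]
  apply Real.sqrt_le_sqrt
  have : (x k)^2 ≤ ∑ i, (x i)^2 := by
    apply Finset.single_le_sum (f := fun i => (x i)^2) (fun i _ => sq_nonneg _) (Finset.mem_univ k)
  simpa [sq_abs] using this

theorem MA_meas_coord {d : ℕ} (k : Fin d) :
    Measurable (fun x : EuclideanSpace ℝ (Fin d) => x k) :=
  (EuclideanSpace.proj (𝕜 := ℝ) k).continuous.measurable

theorem MA_integral_coord {Ω : Type*} [MeasureSpace Ω] {d : ℕ}
    (X : Ω → EuclideanSpace ℝ (Fin d)) (hX : Integrable X) (k : Fin d) :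
    (∫ ω, X ω k) = (∫ ω, X ω) k := by
  have := (EuclideanSpace.proj (𝕜 := ℝ) k).integral_comp_comm hX
  simpa using this

theorem MA_inner_coord {d : ℕ} (x y : EuclideanSpace ℝ (Fin d)) :
    ⟪x, y⟫ = ∑ k, x k * y k := by
  simp [PiLp.inner_apply, RCLike.inner_apply, conj_trivial]
  exact Finset.sum_congr rfl fun _ _ => mul_comm _ _
set_option maxHeartbeats 2000000 in
theorem MA_convergence {d n : ℕ} {m L α σ : ℝ}
    (hn : 0 < n) (hm : 0 < m) (hmL : m ≤ L) (hα0 : 0 < α) (hα : α ≤ 2 / (m + L)) (hσ : 0 ≤ σ)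
    (f : EuclideanSpace ℝ (Fin d) → ℝ) (g : EuclideanSpace ℝ (Fin d) → EuclideanSpace ℝ (Fin d))
    (hgrad : ∀ x, HasGradientAt f (g x) x)
    (hsc : ∀ x y, f y ≥ f x + ⟪g x, y - x⟫ + (m / 2) * ‖y - x‖ ^ 2)
    (hlip : ∀ x y, ‖g x - g y‖ ≤ L * ‖x - y‖)
    (θs : EuclideanSpace ℝ (Fin d)) (hmin : ∀ x, f θs ≤ f x)
    {Ω : Type*} [MeasureSpace Ω] [IsProbabilityMeasure (ℙ : Measure Ω)]
    (ξ : ℕ × Fin n → Ω → EuclideanSpace ℝ (Fin d))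
    (hindep : iIndepFun ξ ℙ)
    (hint : ∀ p, Integrable (ξ p)) (hint2 : ∀ p, Integrable (fun ω => ‖ξ p ω‖ ^ 2))
    (hmean : ∀ p, ∫ ω, ξ p ω = 0) (hvar : ∀ p, ∫ ω, ‖ξ p ω‖ ^ 2 ≤ σ ^ 2)
    (θ0 : EuclideanSpace ℝ (Fin d))
    (θ : ℕ → Fin n → Ω → EuclideanSpace ℝ (Fin d))
    (hinit : ∀ i ω, θ 0 i ω = θ0)
    (hupd : ∀ t i ω, θ (t + 1) i ω = ((1 / (n : ℝ)) • ∑ j, θ t j ω) -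
        α • (g ((1 / (n : ℝ)) • ∑ j, θ t j ω) + ξ (t, i) ω)) :
    ∀ t, (∫ ω, ∑ i, ‖θ t i ω - θs‖ ^ 2) ≤
      (1 - 2 * α * (m * L / (m + L))) ^ t * ((n : ℝ) * ‖θ0 - θs‖ ^ 2) +
        (n : ℝ) * ((m + L) / (2 * m * L)) * α * σ ^ 2 := by
  have hL : 0 < L := lt_of_lt_of_le hm hmL
  have hs0 : (0:ℝ) < m + L := by linarith
  have hn' : (0:ℝ) < n := Nat.cast_pos.2 hn
  set c : ℝ := 1 - 2 * α * (m * L / (m + L)) with hc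
  set B : ℝ := (n:ℝ) * ((m + L) / (2 * m * L)) * α * σ ^ 2 with hB
  set A : ℝ := (n:ℝ) * ‖θ0 - θs‖ ^ 2 with hA
  have hα2 : α * (m + L) ≤ 2 := by
    rw [div_eq_mul_inv] at hα
    calc α * (m + L) ≤ (2 * (m + L)⁻¹) * (m + L) :=
          mul_le_mul_of_nonneg_right hα (le_of_lt hs0)
    _ = 2 := by field_simp
  have hc0 : 0 ≤ c := by
    rw [hc, sub_nonneg]
    have he : 2 * α * (m * L / (m + L)) = (2 * α * m * L) / (m + L) := by ring
    rw [he, div_le_one hs0]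
    nlinarith [sq_nonneg (m - L), mul_le_mul_of_nonneg_left hα2 (by positivity : (0:ℝ) ≤ 2 * m * L)]
  have hB0 : 0 ≤ B := by
    rw [hB]; positivity
  have hfix : (1 - c) * B = (n:ℝ) * α^2 * σ^2 := by
    rw [hc, hB]
    field_simp
    ring
  -- measurable modifications of the noise
  have hasm : ∀ p, AEStronglyMeasurable (ξ p) ℙ := fun p => (hint p).1
  set ξm : ℕ × Fin n → Ω → EuclideanSpace ℝ (Fin d) := fun p => (hasm p).mk (ξ p) with hξmdef
  have hξmeas : ∀ p, Measurable (ξm p) := fun p =>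
    (hasm p).stronglyMeasurable_mk.measurable
  have hξae : ∀ p, ξ p =ᵐ[ℙ] ξm p := fun p => (hasm p).ae_eq_mk
  have hindep' : iIndepFun ξm ℙ := MA_iIndepFun_congr hindep hξae
  have hξint : ∀ p, Integrable (ξm p) ℙ := fun p => (hint p).congr (hξae p)
  have hξint2 : ∀ p, Integrable (fun ω => ‖ξm p ω‖ ^ 2) ℙ := fun p =>
    (hint2 p).congr (by filter_upwards [hξae p] with ω h; rw [h])
  have hξmean : ∀ p, (∫ ω, ξm p ω) = 0 := fun p => by
    rw [← integral_congr_ae (hξae p)]; exact hmean p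
  have hξvar : ∀ p, (∫ ω, ‖ξm p ω‖ ^ 2) ≤ σ ^ 2 := fun p => by
    have he : (fun ω => ‖ξ p ω‖ ^ 2) =ᵐ[ℙ] (fun ω => ‖ξm p ω‖ ^ 2) := by
      filter_upwards [hξae p] with ω h
      rw [h]
    rw [← integral_congr_ae he]
    exact hvar p
  -- measurable version of the iterates
  set θm : ℕ → Fin n → Ω → EuclideanSpace ℝ (Fin d) :=
    fun t => Nat.rec (motive := fun _ => Fin n → Ω → EuclideanSpace ℝ (Fin d))
      (fun _ _ => θ0)
      (fun t prev i ω => ((1 / (n : ℝ)) • ∑ j, prev j ω) -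
        α • (g ((1 / (n : ℝ)) • ∑ j, prev j ω) + ξm (t, i) ω)) t with hθmdef
  have hθm0 : ∀ (i : Fin n) (ω : Ω), θm 0 i ω = θ0 := fun i ω => rfl
  have hθms : ∀ t i ω, θm (t+1) i ω = ((1 / (n : ℝ)) • ∑ j, θm t j ω) -
      α • (g ((1 / (n : ℝ)) • ∑ j, θm t j ω) + ξm (t, i) ω) := fun t i ω => rfl
  have hgcont : Continuous g := by
    have hlw : LipschitzWith (Real.toNNReal L) g := by
      apply LipschitzWith.of_dist_le_mul
      intro x y
      rw [dist_eq_norm, dist_eq_norm]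
      calc ‖g x - g y‖ ≤ L * ‖x - y‖ := hlip x y
      _ ≤ (Real.toNNReal L : ℝ) * ‖x - y‖ :=
          mul_le_mul_of_nonneg_right (Real.le_coe_toNNReal L) (norm_nonneg _)
    exact hlw.continuous
  -- the filtration generated by the noise
  set F : ℕ → MeasurableSpace Ω := fun t =>
    ⨆ p ∈ {p : ℕ × Fin n | p.1 < t}, MeasurableSpace.comap (ξm p) inferInstance with hF
  have hFle : ∀ t, F t ≤ (inferInstance : MeasurableSpace Ω) := by
    intro t
    apply iSup₂_le
    intro p _
    exact (hξmeas p).comap_le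
  have hFmono : ∀ t, F t ≤ F (t+1) := by
    intro t
    apply iSup₂_le
    intro p hp
    exact le_iSup₂_of_le p (Nat.lt_succ_of_lt hp) le_rfl
  have hξF : ∀ t i, Measurable[F (t+1)] (ξm (t,i)) := by
    intro t i
    apply Measurable.of_comap_le
    exact le_iSup₂_of_le (t,i) (Nat.lt_succ_self t) le_rfl
  have hθmF : ∀ t i, Measurable[F t] (θm t i) := by
    intro t
    induction t with
    | zero => intro i; exact measurable_const
    | succ t ih =>
      intro i
      have hbar : Measurable[F t] (fun ω => (1 / (n : ℝ)) • ∑ j, θm t j ω) :=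
        (Finset.measurable_fun_sum _ fun j _ => ih j).fun_const_smul _
      have hbar' : Measurable[F (t+1)] (fun ω => (1 / (n : ℝ)) • ∑ j, θm t j ω) :=
        hbar.mono (hFmono t) le_rfl
      have hg' : Measurable[F (t+1)] (fun ω => g ((1 / (n : ℝ)) • ∑ j, θm t j ω)) :=
        hgcont.measurable.comp hbar'
      exact hbar'.sub ((hg'.add (hξF t i)).const_smul α)
  have hθmM : ∀ t i, Measurable (θm t i) := fun t i => (hθmF t i).mono (hFle t) le_rfl
  -- a.e. equality of iterates
  have hθae : ∀ t i, θ t i =ᵐ[ℙ] θm t i := by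
    intro t
    induction t with
    | zero =>
      intro i
      filter_upwards with ω
      rw [hinit i ω, hθm0 i ω]
    | succ t ih =>
      intro i
      have hall : ∀ᵐ ω ∂ℙ, ∀ j, θ t j ω = θm t j ω := ae_all_iff.2 fun j => ih j
      filter_upwards [hall, hξae (t,i)] with ω hω hξω
      rw [hupd t i ω, hθms t i ω]
      have hsum : (∑ j, θ t j ω) = ∑ j, θm t j ω := Finset.sum_congr rfl fun j _ => hω j
      rw [hsum, hξω]
  -- main induction
  have main : ∀ t, (∀ i, Integrable (fun ω => ‖θm t i ω - θs‖ ^ 2) ℙ) ∧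
      (∫ ω, ∑ i, ‖θm t i ω - θs‖ ^ 2) ≤ c ^ t * A + B := by
    intro t
    induction t with
    | zero =>
      constructor
      · intro i
        have : (fun ω : Ω => ‖θm 0 i ω - θs‖ ^ 2) = fun _ => ‖θ0 - θs‖ ^ 2 := by
          funext ω; rw [hθm0 i ω]
        rw [this]
        exact integrable_const _
      · have he : (∫ ω, ∑ i : Fin n, ‖θm 0 i ω - θs‖ ^ 2) = (n:ℝ) * ‖θ0 - θs‖ ^ 2 := by
          have : (fun ω : Ω => ∑ i : Fin n, ‖θm 0 i ω - θs‖ ^ 2)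
              = fun _ => (n:ℝ) * ‖θ0 - θs‖ ^ 2 := by
            funext ω
            rw [Finset.sum_congr rfl (fun i _ => by rw [hθm0 i ω])]
            rw [Finset.sum_const, Finset.card_univ, Fintype.card_fin, nsmul_eq_mul]
          rw [this, integral_const]
          simp
        rw [he, pow_zero, one_mul, hA]
        linarith
    | succ t ih =>
      obtain ⟨hI, hS⟩ := ih
      set bar : Ω → EuclideanSpace ℝ (Fin d) := fun ω => (1 / (n : ℝ)) • ∑ j, θm t j ω with hbardef
      set Y : Ω → EuclideanSpace ℝ (Fin d) := fun ω => bar ω - α • g (bar ω) - θs with hYdef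
      have hbarF : Measurable[F t] bar :=
        (Finset.measurable_fun_sum _ fun j _ => hθmF t j).fun_const_smul _
      have hbarM : Measurable bar := hbarF.mono (hFle t) le_rfl
      have hYF : Measurable[F t] Y :=
        (hbarF.sub ((hgcont.measurable.comp hbarF).const_smul α)).sub measurable_const
      have hYM : Measurable Y := hYF.mono (hFle t) le_rfl
      have hdiff : ∀ i ω, θm (t+1) i ω - θs = Y ω - α • ξm (t,i) ω := by
        intro i ω
        rw [hθms t i ω, hYdef]
        simp only
        rw [smul_add]
        abel
      have hbarle : ∀ ω, ‖bar ω - θs‖ ^ 2 ≤ (1/(n:ℝ)) * ∑ j, ‖θm t j ω - θs‖ ^ 2 := by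
        intro ω
        have hrec : bar ω - θs = (1 / (n:ℝ)) • ∑ j, (θm t j ω - θs) := by
          rw [Finset.sum_sub_distrib, smul_sub, hbardef]
          congr 1
          rw [Finset.sum_const, Finset.card_univ, Fintype.card_fin]
          rw [← Nat.cast_smul_eq_nsmul ℝ, smul_smul]
          rw [show (1/(n:ℝ)) * (n:ℝ) = 1 by field_simp, one_smul]
        rw [hrec]
        exact MA_avg_sq hn _
      have hYc : ∀ ω, ‖Y ω‖ ^ 2 ≤ c * ‖bar ω - θs‖ ^ 2 := by
        intro ω
        have := MA_contraction hm hmL hα0 hα f g hgrad hsc hlip θs hmin (bar ω)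
        rw [hc]
        exact this
      have hIsum : Integrable (fun ω => ∑ j, ‖θm t j ω - θs‖ ^ 2) ℙ :=
        integrable_finset_sum _ fun j _ => hI j
      have hIbar : Integrable (fun ω => ‖bar ω - θs‖ ^ 2) ℙ := by
        apply Integrable.mono' (hIsum.const_mul (1/(n:ℝ)))
        · exact (((hbarM.sub measurable_const).norm).pow_const 2).aestronglyMeasurable
        · filter_upwards with ω
          rw [Real.norm_eq_abs, abs_of_nonneg (by positivity)]
          exact hbarle ω
      have hIY : Integrable (fun ω => ‖Y ω‖ ^ 2) ℙ := by
        apply Integrable.mono' (hIbar.const_mul c)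
        · exact ((hYM.norm).pow_const 2).aestronglyMeasurable
        · filter_upwards with ω
          rw [Real.norm_eq_abs, abs_of_nonneg (by positivity)]
          exact hYc ω
      have hcross : ∀ i, Integrable (fun ω => ⟪Y ω, ξm (t,i) ω⟫) ℙ ∧
          (∫ ω, ⟪Y ω, ξm (t,i) ω⟫) = 0 := by
        intro i
        have hind : IndepFun Y (ξm (t,i)) ℙ := by
          have hdisj : Disjoint {p : ℕ × Fin n | p.1 < t} ({((t,i) : ℕ × Fin n)} : Set (ℕ × Fin n)) := by
            rw [Set.disjoint_singleton_right]
            simp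
          have h1 := ProbabilityTheory.indep_iSup_of_disjoint
            (m := fun p : ℕ × Fin n => MeasurableSpace.comap (ξm p) inferInstance)
            (fun p => (hξmeas p).comap_le) hindep' hdisj
          have h2 : (⨆ p ∈ ({((t,i) : ℕ × Fin n)} : Set (ℕ × Fin n)),
              MeasurableSpace.comap (ξm p) inferInstance)
              = MeasurableSpace.comap (ξm (t,i)) inferInstance := by
            simp
          rw [h2] at h1
          exact indep_of_indep_of_le_left h1 (Measurable.comap_le hYF)
        have hIk : ∀ k : Fin d, IndepFun (fun ω => Y ω k) (fun ω => ξm (t,i) ω k) ℙ :=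
          fun k => hind.comp (MA_meas_coord k) (MA_meas_coord k)
        have hIYk : ∀ k : Fin d, Integrable (fun ω => Y ω k) ℙ := by
          intro k
          apply Integrable.mono' (hIY.add (integrable_const 1))
          · exact ((MA_meas_coord k).comp hYM).aestronglyMeasurable
          · filter_upwards with ω
            simp only [Pi.add_apply, Real.norm_eq_abs]
            nlinarith [MA_coord_le (Y ω) k, norm_nonneg (Y ω), sq_nonneg (‖Y ω‖ - 1),
              abs_nonneg (Y ω k)]
        have hIξk : ∀ k : Fin d, Integrable (fun ω => ξm (t,i) ω k) ℙ := by
          intro k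
          apply Integrable.mono' (hξint (t,i)).norm
          · exact ((MA_meas_coord k).comp (hξmeas (t,i))).aestronglyMeasurable
          · filter_upwards with ω
            rw [Real.norm_eq_abs]
            exact MA_coord_le _ k
        have hmeank : ∀ k : Fin d, (∫ ω, ξm (t,i) ω k) = 0 := by
          intro k
          rw [MA_integral_coord _ (hξint (t,i)) k, hξmean (t,i)]
          rfl
        have hprod : ∀ k : Fin d, Integrable (fun ω => Y ω k * ξm (t,i) ω k) ℙ :=
          fun k => (hIk k).integrable_mul (hIYk k) (hIξk k)
        have hinner_eq : ∀ ω, ⟪Y ω, ξm (t,i) ω⟫ = ∑ k, Y ω k * ξm (t,i) ω k :=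
          fun ω => MA_inner_coord _ _
        constructor
        · exact (integrable_finset_sum _ fun k _ => hprod k).congr
            (by filter_upwards with ω; rw [← hinner_eq ω])
        · rw [integral_congr_ae (Filter.Eventually.of_forall hinner_eq)]
          rw [integral_finset_sum _ fun k _ => hprod k]
          apply Finset.sum_eq_zero
          intro k _
          rw [(hIk k).integral_fun_mul_eq_mul_integral (hIYk k).1 (hIξk k).1, hmeank k, mul_zero]
      have hIth : ∀ i, Integrable (fun ω => ‖θm (t+1) i ω - θs‖ ^ 2) ℙ := by
        intro i
        apply Integrable.mono' ((hIY.const_mul 2).add ((hξint2 (t,i)).const_mul (2*α^2)))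
        · exact ((((hθmM (t+1) i).sub measurable_const).norm).pow_const 2).aestronglyMeasurable
        · filter_upwards with ω
          rw [Real.norm_eq_abs, abs_of_nonneg (by positivity), hdiff i ω]
          have h1 : ‖Y ω - α • ξm (t,i) ω‖ ≤ ‖Y ω‖ + |α| * ‖ξm (t,i) ω‖ := by
            calc ‖Y ω - α • ξm (t,i) ω‖ ≤ ‖Y ω‖ + ‖α • ξm (t,i) ω‖ := norm_sub_le _ _
            _ = ‖Y ω‖ + |α| * ‖ξm (t,i) ω‖ := by rw [norm_smul, Real.norm_eq_abs]
          have h2 : (0:ℝ) ≤ ‖Y ω - α • ξm (t,i) ω‖ := norm_nonneg _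
          simp only [Pi.add_apply]
          nlinarith [norm_nonneg (Y ω), norm_nonneg (ξm (t,i) ω), sq_abs α,
            sq_nonneg (‖Y ω‖ - |α| * ‖ξm (t,i) ω‖), abs_nonneg α]
      have hexp : ∀ i, (∫ ω, ‖θm (t+1) i ω - θs‖ ^ 2) ≤ (∫ ω, ‖Y ω‖ ^ 2) + α^2 * σ^2 := by
        intro i
        obtain ⟨hci, hcz⟩ := hcross i
        have hpt : ∀ ω, ‖θm (t+1) i ω - θs‖ ^ 2
            = ‖Y ω‖ ^ 2 - 2*α*⟪Y ω, ξm (t,i) ω⟫ + α^2*‖ξm (t,i) ω‖ ^ 2 := by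
          intro ω
          rw [hdiff i ω, norm_sub_sq_real, real_inner_smul_right, norm_smul,
            Real.norm_eq_abs, mul_pow, sq_abs]
          ring
        have i2 : Integrable (fun ω => 2*α*⟪Y ω, ξm (t,i) ω⟫) ℙ := hci.const_mul (2*α)
        have i3 : Integrable (fun ω => α^2*‖ξm (t,i) ω‖ ^ 2) ℙ := (hξint2 (t,i)).const_mul (α^2)
        have i12 : Integrable (fun ω => ‖Y ω‖ ^ 2 - 2*α*⟪Y ω, ξm (t,i) ω⟫) ℙ := hIY.sub i2
        have e1 : (∫ ω, ‖θm (t+1) i ω - θs‖ ^ 2)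
            = (∫ ω, ‖Y ω‖ ^ 2) - 2*α*(∫ ω, ⟪Y ω, ξm (t,i) ω⟫) + α^2*(∫ ω, ‖ξm (t,i) ω‖ ^ 2) := by
          calc (∫ ω, ‖θm (t+1) i ω - θs‖ ^ 2)
              = ∫ ω, (‖Y ω‖ ^ 2 - 2*α*⟪Y ω, ξm (t,i) ω⟫ + α^2*‖ξm (t,i) ω‖ ^ 2) :=
                integral_congr_ae (Filter.Eventually.of_forall hpt)
          _ = (∫ ω, (‖Y ω‖ ^ 2 - 2*α*⟪Y ω, ξm (t,i) ω⟫)) + ∫ ω, α^2*‖ξm (t,i) ω‖ ^ 2 :=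
                integral_add i12 i3
          _ = ((∫ ω, ‖Y ω‖ ^ 2) - ∫ ω, 2*α*⟪Y ω, ξm (t,i) ω⟫) + ∫ ω, α^2*‖ξm (t,i) ω‖ ^ 2 := by
                rw [integral_sub hIY i2]
          _ = (∫ ω, ‖Y ω‖ ^ 2) - 2*α*(∫ ω, ⟪Y ω, ξm (t,i) ω⟫) + α^2*(∫ ω, ‖ξm (t,i) ω‖ ^ 2) := by
                rw [integral_const_mul, integral_const_mul]
        rw [e1, hcz, mul_zero, sub_zero]
        have := mul_le_mul_of_nonneg_left (hξvar (t,i)) (sq_nonneg α)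
        linarith
      constructor
      · exact hIth
      · have hsum1 : (∫ ω, ∑ i, ‖θm (t+1) i ω - θs‖ ^ 2)
            = ∑ i : Fin n, ∫ ω, ‖θm (t+1) i ω - θs‖ ^ 2 :=
          integral_finset_sum _ fun i _ => hIth i
        have hYint : (∫ ω, ‖Y ω‖ ^ 2) ≤ c * ((1/(n:ℝ)) * ∫ ω, ∑ j, ‖θm t j ω - θs‖ ^ 2) := by
          calc (∫ ω, ‖Y ω‖ ^ 2) ≤ ∫ ω, c * ‖bar ω - θs‖ ^ 2 :=
                integral_mono hIY (hIbar.const_mul c) (fun ω => hYc ω)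
          _ = c * ∫ ω, ‖bar ω - θs‖ ^ 2 := integral_const_mul _ _
          _ ≤ c * ((1/(n:ℝ)) * ∫ ω, ∑ j, ‖θm t j ω - θs‖ ^ 2) := by
              apply mul_le_mul_of_nonneg_left _ hc0
              calc (∫ ω, ‖bar ω - θs‖ ^ 2) ≤ ∫ ω, (1/(n:ℝ)) * ∑ j, ‖θm t j ω - θs‖ ^ 2 :=
                    integral_mono hIbar (hIsum.const_mul _) (fun ω => hbarle ω)
              _ = (1/(n:ℝ)) * ∫ ω, ∑ j, ‖θm t j ω - θs‖ ^ 2 := integral_const_mul _ _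
        rw [hsum1]
        calc (∑ i : Fin n, ∫ ω, ‖θm (t+1) i ω - θs‖ ^ 2)
            ≤ ∑ _i : Fin n, ((∫ ω, ‖Y ω‖ ^ 2) + α^2 * σ^2) :=
              Finset.sum_le_sum fun i _ => hexp i
        _ = (n:ℝ) * ((∫ ω, ‖Y ω‖ ^ 2) + α^2 * σ^2) := by
            rw [Finset.sum_const, Finset.card_univ, Fintype.card_fin, nsmul_eq_mul]
        _ ≤ (n:ℝ) * ((c * ((1/(n:ℝ)) * ∫ ω, ∑ j, ‖θm t j ω - θs‖ ^ 2)) + α^2 * σ^2) := by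
            apply mul_le_mul_of_nonneg_left _ (le_of_lt hn')
            linarith [hYint]
        _ = c * (∫ ω, ∑ j, ‖θm t j ω - θs‖ ^ 2) + (n:ℝ) * α^2 * σ^2 := by
            field_simp
        _ ≤ c * (c ^ t * A + B) + (n:ℝ) * α^2 * σ^2 :=
            add_le_add_left (mul_le_mul_of_nonneg_left hS hc0) _
        _ = c ^ (t+1) * A + B := by
            rw [← hfix]
            ring
  intro t
  have heq : (∫ ω, ∑ i, ‖θ t i ω - θs‖ ^ 2) = ∫ ω, ∑ i, ‖θm t i ω - θs‖ ^ 2 := by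
    apply integral_congr_ae
    have hall : ∀ᵐ ω ∂ℙ, ∀ j, θ t j ω = θm t j ω := ae_all_iff.2 fun j => hθae t j
    filter_upwards [hall] with ω hω
    exact Finset.sum_congr rfl fun j _ => by rw [hω j]
  rw [heq]
  exact (main t).2
end

section
/- Let f be m-strongly convex with L-Lipschitz gradient, minimizer θ_*, step 0 < α ≤ 2/(m+L), and consider averaged SGD θ̄_{t+1} = θ̄_t − α(∇f(θ̄_t) + ξ̄_t) with E[ξ̄_t] = 0, E‖ξ̄_t‖² ≤ σ²/n, noises independent across t. Then E[‖θ̄_t − θ_*‖²] ≤ (1 − 2α·mL/(m+L))^t·‖θ̄_0 − θ_*‖² + ((m+L)/(2mLn))·α·σ². -/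
open scoped RealInnerProductSpace
open MeasureTheory ProbabilityTheory

section Det

variable {F : Type*} [NormedAddCommGroup F] [InnerProductSpace ℝ F] [CompleteSpace F]

/-- Descent lemma: a function with `C`-Lipschitz gradient satisfies the quadratic upper bound. -/
theorem my_descent {f : F → ℝ} {g : F → F} {C : ℝ} (hC : 0 ≤ C)
    (hgrad : ∀ x, HasGradientAt f (g x) x)
    (hlip : ∀ x y, ‖g x - g y‖ ≤ C * ‖x - y‖) (x y : F) :
    f y ≤ f x + ⟪g x, y - x⟫ + C / 2 * ‖y - x‖ ^ 2 := by
  have hgc : Continuous g := by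
    have : LipschitzWith (Real.toNNReal C) g := by
      intro a b
      rw [edist_nndist, edist_nndist, ← ENNReal.coe_mul, ENNReal.coe_le_coe,
        ← NNReal.coe_le_coe]
      push_cast
      rw [Real.coe_toNNReal _ hC]
      simpa [nndist_eq_nnnorm, dist_eq_norm] using hlip a b
    exact this.continuous
  set φ' : ℝ → ℝ := fun t => ⟪g (x + t • (y - x)), y - x⟫ with hφ'
  have hline : ∀ t : ℝ, HasDerivAt (fun s : ℝ => x + s • (y - x)) (y - x) t := by
    intro t
    simpa using ((hasDerivAt_id t).smul_const (y - x)).const_add x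
  have hderiv : ∀ t : ℝ, HasDerivAt (fun s => f (x + s • (y - x))) (φ' t) t := by
    intro t
    have h1 : HasFDerivAt f (InnerProductSpace.toDual ℝ F (g (x + t • (y - x))))
        (x + t • (y - x)) := (hasGradientAt_iff_hasFDerivAt.1 (hgrad _))
    have := h1.comp_hasDerivAt t (hline t)
    simpa [hφ', InnerProductSpace.toDual_apply_apply, Function.comp_def] using this
  have hcont : Continuous φ' := by
    apply Continuous.inner
    · exact hgc.comp (by continuity)
    · exact continuous_const
  have hFTC : f y - f x = ∫ t in (0:ℝ)..1, φ' t := by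
    have := intervalIntegral.integral_eq_sub_of_hasDerivAt
        (f := fun s => f (x + s • (y - x))) (f' := φ')
        (fun t _ => hderiv t) (hcont.intervalIntegrable 0 1)
    simp only [one_smul, zero_smul, add_zero] at this
    rw [this]
    congr 1 <;> abel_nf <;> simp
  have hbound : ∀ t ∈ Set.Icc (0:ℝ) 1, φ' t ≤ ⟪g x, y - x⟫ + C * t * ‖y - x‖ ^ 2 := by
    intro t ht
    have h1 : φ' t - ⟪g x, y - x⟫ = ⟪g (x + t • (y - x)) - g x, y - x⟫ := by
      rw [hφ']; simp [inner_sub_left]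
    have h2 : ⟪g (x + t • (y - x)) - g x, y - x⟫ ≤ C * t * ‖y - x‖ ^ 2 := by
      calc ⟪g (x + t • (y - x)) - g x, y - x⟫ ≤ ‖g (x + t • (y - x)) - g x‖ * ‖y - x‖ :=
            real_inner_le_norm _ _
        _ ≤ C * ‖(x + t • (y - x)) - x‖ * ‖y - x‖ := by
            have := hlip (x + t • (y - x)) x
            nlinarith [norm_nonneg (y - x)]
        _ = C * t * ‖y - x‖ ^ 2 := by
            rw [add_sub_cancel_left, norm_smul, Real.norm_eq_abs, abs_of_nonneg ht.1]
            ring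
    linarith
  have hint : (∫ t in (0:ℝ)..1, φ' t) ≤ ∫ t in (0:ℝ)..1, (⟪g x, y - x⟫ + C * t * ‖y - x‖ ^ 2) := by
    apply intervalIntegral.integral_mono_on zero_le_one
      (hcont.intervalIntegrable 0 1)
      (Continuous.intervalIntegrable (by continuity) 0 1)
    exact hbound
  have hval : (∫ t in (0:ℝ)..1, (⟪g x, y - x⟫ + C * t * ‖y - x‖ ^ 2))
      = ⟪g x, y - x⟫ + C / 2 * ‖y - x‖ ^ 2 := by
    rw [intervalIntegral.integral_add (by simp) (Continuous.intervalIntegrable (by continuity) 0 1)]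
    simp only [intervalIntegral.integral_const, smul_eq_mul, sub_zero, one_mul]
    have : (∫ t in (0:ℝ)..1, C * t * ‖y - x‖ ^ 2)
        = (C * ‖y - x‖ ^ 2) * ∫ t in (0:ℝ)..1, t := by
      rw [← intervalIntegral.integral_const_mul]
      congr 1; ext t; ring
    rw [this, integral_id]
    ring
  linarith [hFTC, hint, hval]


/-- Cocoercivity from convexity + descent (pure algebra). -/
theorem my_coco {f : F → ℝ} {g : F → F} {C : ℝ} (hC : 0 < C)
    (hconv : ∀ x y, f x + ⟪g x, y - x⟫ ≤ f y)
    (hdesc : ∀ x y, f y ≤ f x + ⟪g x, y - x⟫ + C / 2 * ‖y - x‖ ^ 2) (x y : F) :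
    (1 / C) * ‖g y - g x‖ ^ 2 ≤ ⟪g y - g x, y - x⟫ := by
  -- first: one-sided bound
  have key : ∀ a b : F, (1 / (2 * C)) * ‖g b - g a‖ ^ 2 ≤ f b - f a - ⟪g a, b - a⟫ := by
    intro a b
    set H := g b - g a with hH
    set w := b - (1 / C) • H with hw
    have h1 : f w ≤ f b + ⟪g b, w - b⟫ + C / 2 * ‖w - b‖ ^ 2 := hdesc b w
    have h2 : f a + ⟪g a, w - a⟫ ≤ f w := hconv a w
    have hwb : w - b = -((1 / C) • H) := by rw [hw]; abel
    have e1 : ⟪g b, w - b⟫ = -(1 / C) * ⟪g b, H⟫ := by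
      rw [hwb, inner_neg_right, real_inner_smul_right]; ring
    have e2 : ‖w - b‖ ^ 2 = (1 / C) ^ 2 * ‖H‖ ^ 2 := by
      rw [hwb, norm_neg, norm_smul, Real.norm_eq_abs, mul_pow, sq_abs]
    have e3 : ⟪g a, w - a⟫ = ⟪g a, b - a⟫ - (1 / C) * ⟪g a, H⟫ := by
      have : w - a = (b - a) - (1 / C) • H := by rw [hw]; abel
      rw [this, inner_sub_right, real_inner_smul_right]
    have e4 : ⟪g b, H⟫ - ⟪g a, H⟫ = ‖H‖ ^ 2 := by
      rw [← inner_sub_left, ← hH, real_inner_self_eq_norm_sq]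
    have e5 : C / 2 * ((1 / C) ^ 2 * ‖H‖ ^ 2) = 1 / (2 * C) * ‖H‖ ^ 2 := by
      field_simp
    have e6 : (1 / C) * ⟪g b, H⟫ - (1 / C) * ⟪g a, H⟫ = (1 / C) * ‖H‖ ^ 2 := by
      rw [← mul_sub, e4]
    have e8 : (1 / C) * ‖H‖ ^ 2 - 1 / (2 * C) * ‖H‖ ^ 2 = 1 / (2 * C) * ‖H‖ ^ 2 := by
      field_simp; ring
    rw [e1, e2] at h1
    rw [e3] at h2
    nlinarith [h1, h2, e5, e6, e8]
  have k1 := key x y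
  have k2 := key y x
  have : ⟪g y, x - y⟫ = - ⟪g y, y - x⟫ := by rw [← inner_neg_right]; congr 1; abel
  have h4 : ⟪g x, y - x⟫ = ⟪g y, y - x⟫ - ⟪g y - g x, y - x⟫ := by
    rw [inner_sub_left]; ring
  have hxy : ‖g x - g y‖ = ‖g y - g x‖ := by rw [← norm_neg]; congr 1; abel
  rw [hxy] at k2
  have e8 : 1 / C * ‖g y - g x‖ ^ 2 = 2 * (1 / (2 * C) * ‖g y - g x‖ ^ 2) := by
    field_simp
  linarith [k1, k2, e8]

/-- Key coercivity inequality for strongly convex functions with Lipschitz gradient. -/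
theorem my_key {f : F → ℝ} {g : F → F} {m L : ℝ} (hm : 0 < m) (hmL : m ≤ L)
    (hgrad : ∀ x, HasGradientAt f (g x) x)
    (hsc : ∀ x y, f y ≥ f x + ⟪g x, y - x⟫ + (m / 2) * ‖y - x‖ ^ 2)
    (hlip : ∀ x y, ‖g x - g y‖ ≤ L * ‖x - y‖) (x y : F) :
    ‖g y - g x‖ ^ 2 + m * L * ‖y - x‖ ^ 2 ≤ (m + L) * ⟪g y - g x, y - x⟫ := by
  have hL : (0:ℝ) < L := lt_of_lt_of_le hm hmL
  have hdesc := my_descent hL.le hgrad hlip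
  have hmono : ∀ a b : F, m * ‖b - a‖ ^ 2 ≤ ⟪g b - g a, b - a⟫ := by
    intro a b
    have h1 := hsc a b
    have h2 := hsc b a
    have e1 : ⟪g b, a - b⟫ = - ⟪g b, b - a⟫ := by rw [← inner_neg_right]; congr 1; abel
    have e2 : ‖a - b‖ ^ 2 = ‖b - a‖ ^ 2 := by rw [← norm_neg (a - b)]; congr 2; abel
    have e3 : ⟪g b - g a, b - a⟫ = ⟪g b, b - a⟫ - ⟪g a, b - a⟫ := inner_sub_left _ _ _
    rw [e1, e2] at h2
    linarith [h1, h2]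
  rcases eq_or_lt_of_le hmL with heq | hlt
  · -- m = L
    have hcoco := my_coco hL (fun a b => by nlinarith [hsc a b, sq_nonneg ‖b - a‖]) hdesc x y
    have hmono' := hmono x y
    subst heq
    have hc2 : ‖g y - g x‖ ^ 2 ≤ m * ⟪g y - g x, y - x⟫ := by
      have h2 := mul_le_mul_of_nonneg_left hcoco hm.le
      calc ‖g y - g x‖ ^ 2 = m * (1 / m * ‖g y - g x‖ ^ 2) := by field_simp
        _ ≤ m * ⟪g y - g x, y - x⟫ := h2
    have hc3 := mul_le_mul_of_nonneg_left hmono' hm.le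
    linarith [hc2, hc3]
  · -- m < L; residual function
    set h : F → ℝ := fun z => f z - m / 2 * ‖z‖ ^ 2 with hh
    set G : F → F := fun z => g z - m • z with hG
    have expand : ∀ a b : F, ‖b - a‖ ^ 2 = ‖b‖ ^ 2 - 2 * ⟪b, a⟫ + ‖a‖ ^ 2 :=
      fun a b => norm_sub_sq_real b a
    have inner_exp : ∀ a b : F, ⟪G a, b - a⟫ = ⟪g a, b - a⟫ - m * ⟪a, b⟫ + m * ‖a‖ ^ 2 := by
      intro a b
      rw [hG]
      simp only [inner_sub_left, real_inner_smul_left, inner_sub_right]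
      rw [real_inner_self_eq_norm_sq]
      ring
    have hconv_h : ∀ a b : F, h a + ⟪G a, b - a⟫ ≤ h b := by
      intro a b
      have h1 := hsc a b
      have h2 := expand a b
      have h3 := inner_exp a b
      simp only [hh]
      nlinarith [real_inner_comm a b]
    have hdesc_h : ∀ a b : F, h b ≤ h a + ⟪G a, b - a⟫ + (L - m) / 2 * ‖b - a‖ ^ 2 := by
      intro a b
      have h1 := hdesc a b
      have h2 := expand a b
      have h3 := inner_exp a b
      simp only [hh]
      nlinarith [real_inner_comm a b]
    have hcoco := my_coco (by linarith : (0:ℝ) < L - m) hconv_h hdesc_h x y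
    have hGx : G y - G x = (g y - g x) - m • (y - x) := by
      rw [hG]; simp only [smul_sub]; abel
    have e1 : ‖G y - G x‖ ^ 2
        = ‖g y - g x‖ ^ 2 - 2 * m * ⟪g y - g x, y - x⟫ + m ^ 2 * ‖y - x‖ ^ 2 := by
      rw [hGx, norm_sub_sq_real, real_inner_smul_right, norm_smul, Real.norm_eq_abs,
        abs_of_nonneg hm.le, mul_pow]
      ring
    have e2 : ⟪G y - G x, y - x⟫ = ⟪g y - g x, y - x⟫ - m * ‖y - x‖ ^ 2 := by
      rw [hGx, inner_sub_left, real_inner_smul_left, real_inner_self_eq_norm_sq]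
    have hLm : (0:ℝ) < L - m := by linarith
    rw [e1, e2] at hcoco
    have h5 : (1 / (L - m)) * (L - m) = 1 := by field_simp
    nlinarith [hcoco, mul_le_mul_of_nonneg_left hcoco hLm.le]
  

theorem my_grad_zero {f : F → ℝ} {g : F → F} (hgrad : ∀ x, HasGradientAt f (g x) x)
    {θs : F} (hmin : ∀ x, f θs ≤ f x) : g θs = 0 := by
  have h1 : IsLocalMin f θs := Filter.Eventually.of_forall hmin
  have h2 := h1.hasFDerivAt_eq_zero (hasGradientAt_iff_hasFDerivAt.1 (hgrad θs))
  have h3 : ⟪g θs, g θs⟫ = 0 := by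
    have := congrArg (fun (L : F →L[ℝ] ℝ) => L (g θs)) h2
    simpa [InnerProductSpace.toDual_apply_apply] using this
  simpa [inner_self_eq_zero] using h3

/-- One-step contraction of the deterministic gradient map. -/
theorem my_contract {f : F → ℝ} {g : F → F} {m L α : ℝ} (hm : 0 < m) (hmL : m ≤ L)
    (hα0 : 0 < α) (hα : α ≤ 2 / (m + L))
    (hgrad : ∀ x, HasGradientAt f (g x) x)
    (hsc : ∀ x y, f y ≥ f x + ⟪g x, y - x⟫ + (m / 2) * ‖y - x‖ ^ 2)
    (hlip : ∀ x y, ‖g x - g y‖ ≤ L * ‖x - y‖)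
    {θs : F} (hmin : ∀ x, f θs ≤ f x) (z : F) :
    ‖z - α • g z - θs‖ ^ 2 ≤ (1 - 2 * α * (m * L / (m + L))) * ‖z - θs‖ ^ 2 := by
  have hL : (0:ℝ) < L := lt_of_lt_of_le hm hmL
  have hmL' : (0:ℝ) < m + L := by linarith
  have hg0 : g θs = 0 := my_grad_zero hgrad hmin
  have hkey := my_key hm hmL hgrad hsc hlip θs z
  rw [hg0, sub_zero] at hkey
  have expand : z - α • g z - θs = (z - θs) - α • g z := by abel
  have e1 : ‖(z - θs) - α • g z‖ ^ 2
      = ‖z - θs‖ ^ 2 - 2 * α * ⟪g z, z - θs⟫ + α ^ 2 * ‖g z‖ ^ 2 := by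
    rw [norm_sub_sq_real, real_inner_smul_right, norm_smul, Real.norm_eq_abs,
      abs_of_nonneg hα0.le, mul_pow, real_inner_comm]
    ring
  rw [expand, e1]
  -- from hkey : ‖g z‖^2 + m*L*‖z-θs‖^2 ≤ (m+L) * ⟪g z, z - θs⟫
  have h2 : α * (m + L) ≤ 2 := by
    rw [div_eq_mul_inv] at hα
    calc α * (m + L) ≤ (2 * (m + L)⁻¹) * (m + L) := by
          apply mul_le_mul_of_nonneg_right hα hmL'.le
      _ = 2 := by field_simp
  -- ⟪g z, z-θs⟫ ≥ (‖g z‖² + mL‖z-θs‖²)/(m+L)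
  have h3 : (m * L / (m + L)) * ‖z - θs‖ ^ 2 + (1 / (m + L)) * ‖g z‖ ^ 2
      ≤ ⟪g z, z - θs⟫ := by
    rw [← mul_le_mul_iff_right₀ hmL']
    have he : (m + L) * ((m * L / (m + L)) * ‖z - θs‖ ^ 2 + (1 / (m + L)) * ‖g z‖ ^ 2)
        = m * L * ‖z - θs‖ ^ 2 + ‖g z‖ ^ 2 := by field_simp
    rw [he]; linarith [hkey]
  have h4 : α * ((m * L / (m + L)) * ‖z - θs‖ ^ 2 + (1 / (m + L)) * ‖g z‖ ^ 2)
      ≤ α * ⟪g z, z - θs⟫ := mul_le_mul_of_nonneg_left h3 hα0.le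
  have h5 : α ^ 2 * ‖g z‖ ^ 2 ≤ α * (2 / (m + L)) * ‖g z‖ ^ 2 := by
    have : α ^ 2 ≤ α * (2 / (m + L)) := by
      rw [pow_two]
      exact mul_le_mul_of_nonneg_left hα hα0.le
    exact mul_le_mul_of_nonneg_right this (sq_nonneg _)
  have h6 : α * (2 / (m + L)) * ‖g z‖ ^ 2 = 2 * (α * ((1 / (m + L)) * ‖g z‖ ^ 2)) := by
    ring
  linarith [h4, h5]

end Det

section Prob

variable {Ω : Type*} [MeasureSpace Ω] [IsProbabilityMeasure (ℙ : Measure Ω)]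

/-- a.e. transfer of joint independence. -/
theorem my_iIndepFun_ae_eq {ι β : Type*} [MeasurableSpace β] {f f' : ι → Ω → β}
    (hf : iIndepFun f ℙ) (h : ∀ i, f i =ᵐ[ℙ] f' i) :
    iIndepFun f' ℙ := by
  rw [iIndepFun_iff_measure_inter_preimage_eq_mul] at hf ⊢
  intro S sets hsets
  have hae : ∀ i, (f i ⁻¹' sets i : Set Ω) =ᵐ[ℙ] (f' i ⁻¹' sets i : Set Ω) := by
    intro i
    filter_upwards [h i] with ω hω
    show (ω ∈ f i ⁻¹' sets i) = (ω ∈ f' i ⁻¹' sets i)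
    simp only [Set.mem_preimage, hω]
  have h1 : ∀ i, (ℙ : Measure Ω) (f' i ⁻¹' sets i) = ℙ (f i ⁻¹' sets i) :=
    fun i => (measure_congr (hae i)).symm
  have h2 : (ℙ : Measure Ω) (⋂ i ∈ S, f' i ⁻¹' sets i) = ℙ (⋂ i ∈ S, f i ⁻¹' sets i) := by
    apply measure_congr
    have hball : ∀ᵐ ω ∂(ℙ : Measure Ω), ∀ i ∈ S, f i ω = f' i ω :=
      (ae_ball_iff S.countable_toSet).2 fun i _ => h i
    filter_upwards [hball] with ω hω
    show (ω ∈ ⋂ i ∈ S, f' i ⁻¹' sets i) = (ω ∈ ⋂ i ∈ S, f i ⁻¹' sets i)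
    apply propext
    simp only [Set.mem_iInter, Set.mem_preimage]
    constructor <;> intro hmem i hi
    · rw [hω i hi]; exact hmem i hi
    · rw [← hω i hi]; exact hmem i hi
  rw [h2, hf S hsets]
  exact Finset.prod_congr rfl fun i _ => (h1 i).symm

variable {E' : Type*} [NormedAddCommGroup E'] [InnerProductSpace ℝ E'] [CompleteSpace E']
  [MeasurableSpace E'] [BorelSpace E'] [SecondCountableTopology E']

theorem my_integrable_inner {v w : Ω → E'} (hv : MemLp v 2 ℙ) (hw : MemLp w 2 ℙ) :
    Integrable (fun ω => ⟪v ω, w ω⟫) ℙ := by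
  have := L2.integrable_inner (𝕜 := ℝ) (hv.toLp v) (hw.toLp w)
  apply this.congr
  filter_upwards [hv.coeFn_toLp, hw.coeFn_toLp] with ω h1 h2
  rw [h1, h2]

/-- The cross term vanishes for independent, centered factors. -/
theorem my_cross_zero {d : ℕ} {v w : Ω → EuclideanSpace ℝ (Fin d)}
    (h : IndepFun v w ℙ) (hv : MemLp v 2 ℙ) (hw : MemLp w 2 ℙ)
    (hw0 : ∫ ω, w ω = 0) : ∫ ω, ⟪v ω, w ω⟫ = 0 := by
  have hinner : ∀ ω, ⟪v ω, w ω⟫ = ∑ i, v ω i * w ω i := by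
    intro ω
    rw [PiLp.inner_apply]
    simp [RCLike.inner_apply, mul_comm]
  rw [integral_congr_ae (Filter.Eventually.of_forall hinner)]
  have hvi : ∀ i, MemLp (fun ω => v ω i) 2 ℙ := fun i => by
    simpa [Function.comp_def] using (EuclideanSpace.proj (𝕜 := ℝ) i).comp_memLp' hv
  have hwi : ∀ i, MemLp (fun ω => w ω i) 2 ℙ := fun i => by
    simpa [Function.comp_def] using (EuclideanSpace.proj (𝕜 := ℝ) i).comp_memLp' hw
  have hint : ∀ i : Fin d, Integrable (fun ω => v ω i * w ω i) ℙ := by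
    intro i
    have := my_integrable_inner (hvi i) (hwi i)
    simpa [RCLike.inner_apply, mul_comm] using this
  rw [integral_finset_sum _ fun i _ => hint i]
  apply Finset.sum_eq_zero
  intro i _
  have hindep_i : IndepFun (fun ω => v ω i) (fun ω => w ω i) ℙ := by
    exact h.comp (EuclideanSpace.proj (𝕜 := ℝ) i).measurable (EuclideanSpace.proj (𝕜 := ℝ) i).measurable
  have := hindep_i.integral_mul_eq_mul_integral (hvi i).1 (hwi i).1
  rw [show (fun ω => v ω i * w ω i) = (fun ω => v ω i) * (fun ω => w ω i) from rfl, this]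
  have hwint : Integrable w ℙ := hw.integrable one_le_two
  have : ∫ ω, w ω i = 0 := by
    have hc := (EuclideanSpace.proj (𝕜 := ℝ) i).integral_comp_comm hwint
    rw [show (fun ω => w ω i) = fun ω => (EuclideanSpace.proj (𝕜 := ℝ) i) (w ω) from rfl, hc, hw0,
      map_zero]
  rw [this, mul_zero]

end Prob

section Traj

variable {d : ℕ} {Ω : Type*} [MeasureSpace Ω] [IsProbabilityMeasure (ℙ : Measure Ω)]

/-- The SGD trajectory. -/
noncomputable def traj (α : ℝ) (g : EuclideanSpace ℝ (Fin d) → EuclideanSpace ℝ (Fin d))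
    (θ0 : EuclideanSpace ℝ (Fin d)) (ξ : ℕ → Ω → EuclideanSpace ℝ (Fin d)) :
    ℕ → Ω → EuclideanSpace ℝ (Fin d)
  | 0 => fun _ => θ0
  | (t + 1) => fun ω => traj α g θ0 ξ t ω - α • (g (traj α g θ0 ξ t ω) + ξ t ω)

theorem my_indep_mono {m₁ m₂ m₃ m₄ : MeasurableSpace Ω}
    (h : Indep m₁ m₂ ℙ) (h31 : m₃ ≤ m₁) (h42 : m₄ ≤ m₂) : Indep m₃ m₄ ℙ := by
  rw [Indep_iff] at h ⊢
  exact fun t1 t2 ht1 ht2 => h t1 t2 (h31 _ ht1) (h42 _ ht2)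

variable {α : ℝ} {g : EuclideanSpace ℝ (Fin d) → EuclideanSpace ℝ (Fin d)}
  {θ0 : EuclideanSpace ℝ (Fin d)} {ξ : ℕ → Ω → EuclideanSpace ℝ (Fin d)}

theorem traj_measurable (hg : Continuous g) (hξ : ∀ i, Measurable (ξ i)) (t : ℕ) :
    Measurable (traj α g θ0 ξ t) := by
  induction t with
  | zero => exact measurable_const
  | succ t ih =>
    show Measurable fun ω => traj α g θ0 ξ t ω - α • (g (traj α g θ0 ξ t ω) + ξ t ω)
    exact ih.sub ((((hg.measurable.comp ih).add (hξ t)).const_smul α))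

theorem traj_comap_le (hg : Continuous g) (t : ℕ) :
    MeasurableSpace.comap (traj α g θ0 ξ t) inferInstance
      ≤ ⨆ i ∈ {i : ℕ | i < t}, MeasurableSpace.comap (ξ i) inferInstance := by
  induction t with
  | zero =>
    rintro s ⟨B, hB, rfl⟩
    by_cases hθ : θ0 ∈ B
    · have h1 : traj α g θ0 ξ 0 ⁻¹' B = Set.univ := by
        ext ω; simp [traj, hθ]
      rw [h1]
      exact @MeasurableSet.univ Ω (⨆ i ∈ {i : ℕ | i < 0}, MeasurableSpace.comap (ξ i) inferInstance)
    · have h1 : traj α g θ0 ξ 0 ⁻¹' B = ∅ := by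
        ext ω; simp [traj, hθ]
      rw [h1]
      exact @MeasurableSet.empty Ω (⨆ i ∈ {i : ℕ | i < 0}, MeasurableSpace.comap (ξ i) inferInstance)
  | succ t ih =>
    have hφ : Measurable (fun p : (EuclideanSpace ℝ (Fin d)) × (EuclideanSpace ℝ (Fin d)) =>
        p.1 - α • (g p.1 + p.2)) := by
      exact (measurable_fst.sub (((hg.measurable.comp measurable_fst).add
        measurable_snd).const_smul α))
    have h0 : traj α g θ0 ξ (t + 1)
        = (fun p : (EuclideanSpace ℝ (Fin d)) × (EuclideanSpace ℝ (Fin d)) =>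
            p.1 - α • (g p.1 + p.2)) ∘ (fun ω => (traj α g θ0 ξ t ω, ξ t ω)) := rfl
    rw [h0]
    calc MeasurableSpace.comap _ inferInstance
        = MeasurableSpace.comap (fun ω => (traj α g θ0 ξ t ω, ξ t ω))
            (MeasurableSpace.comap (fun p : (EuclideanSpace ℝ (Fin d)) × _ =>
              p.1 - α • (g p.1 + p.2)) inferInstance) := (MeasurableSpace.comap_comp).symm
      _ ≤ MeasurableSpace.comap (fun ω => (traj α g θ0 ξ t ω, ξ t ω)) inferInstance :=
          MeasurableSpace.comap_mono (measurable_iff_comap_le.1 hφ)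
      _ = MeasurableSpace.comap (traj α g θ0 ξ t) inferInstance
            ⊔ MeasurableSpace.comap (ξ t) inferInstance := by
          show MeasurableSpace.comap _ (MeasurableSpace.prod _ _) = _
          rw [MeasurableSpace.prod, MeasurableSpace.comap_sup,
            MeasurableSpace.comap_comp, MeasurableSpace.comap_comp]
          rfl
      _ ≤ ⨆ i ∈ {i : ℕ | i < t + 1}, MeasurableSpace.comap (ξ i) inferInstance := by
          apply sup_le
          · refine le_trans ih (biSup_mono ?_)
            intro i hi
            exact Nat.lt_succ_of_lt hi
          · exact le_biSup (fun i => MeasurableSpace.comap (ξ i) inferInstance)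
              (show t ∈ {i : ℕ | i < t + 1} from Nat.lt_succ_self t)

theorem traj_indepFun (hg : Continuous g) (hξ : ∀ i, Measurable (ξ i))
    (hindep : iIndepFun ξ ℙ) (t : ℕ) :
    IndepFun (traj α g θ0 ξ t) (ξ t) ℙ := by
  rw [IndepFun_iff_Indep]
  rw [iIndepFun_iff_iIndep] at hindep
  have hbig := indep_biSup_compl (fun n => measurable_iff_comap_le.1 (hξ n)) hindep {i | i < t}
  apply my_indep_mono hbig (traj_comap_le hg t)
  exact le_biSup (fun i => MeasurableSpace.comap (ξ i) inferInstance)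
    (show t ∈ {i : ℕ | i < t}ᶜ by simp)

end Traj


set_option maxHeartbeats 1000000 in
theorem averaged_SGD_convergence {d n : ℕ} {m L α σ : ℝ}
    (hn : 0 < n) (hm : 0 < m) (hmL : m ≤ L) (hα0 : 0 < α) (hα : α ≤ 2 / (m + L)) (hσ : 0 ≤ σ)
    (f : EuclideanSpace ℝ (Fin d) → ℝ) (g : EuclideanSpace ℝ (Fin d) → EuclideanSpace ℝ (Fin d))
    (hgrad : ∀ x, HasGradientAt f (g x) x)
    (hsc : ∀ x y, f y ≥ f x + ⟪g x, y - x⟫ + (m / 2) * ‖y - x‖ ^ 2)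
    (hlip : ∀ x y, ‖g x - g y‖ ≤ L * ‖x - y‖)
    (θs : EuclideanSpace ℝ (Fin d)) (hmin : ∀ x, f θs ≤ f x)
    {Ω : Type*} [MeasureSpace Ω] [IsProbabilityMeasure (ℙ : Measure Ω)]
    (ξ : ℕ → Ω → EuclideanSpace ℝ (Fin d))
    (hindep : iIndepFun ξ ℙ)
    (hint : ∀ t, Integrable (ξ t)) (hint2 : ∀ t, Integrable (fun ω => ‖ξ t ω‖ ^ 2))
    (hmean : ∀ t, ∫ ω, ξ t ω = 0) (hvar : ∀ t, ∫ ω, ‖ξ t ω‖ ^ 2 ≤ σ ^ 2 / n)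
    (θ0 : EuclideanSpace ℝ (Fin d))
    (x : ℕ → Ω → EuclideanSpace ℝ (Fin d))
    (hinit : ∀ ω, x 0 ω = θ0)
    (hupd : ∀ t ω, x (t + 1) ω = x t ω - α • (g (x t ω) + ξ t ω)) :
    ∀ t, (∫ ω, ‖x t ω - θs‖ ^ 2) ≤
      (1 - 2 * α * (m * L / (m + L))) ^ t * ‖θ0 - θs‖ ^ 2 +
        ((m + L) / (2 * m * L * n)) * α * σ ^ 2 := by
  classical
  have hL : (0:ℝ) < L := lt_of_lt_of_le hm hmL
  have hmLpos : (0:ℝ) < m + L := by linarith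
  have hn' : (0:ℝ) < (n:ℝ) := by exact_mod_cast hn
  have hgc : Continuous g := by
    have hl : LipschitzWith (Real.toNNReal L) g := by
      intro a b
      rw [edist_nndist, edist_nndist, ← ENNReal.coe_mul, ENNReal.coe_le_coe, ← NNReal.coe_le_coe]
      push_cast
      rw [Real.coe_toNNReal _ hL.le]
      simpa [nndist_eq_nnnorm, dist_eq_norm] using hlip a b
    exact hl.continuous
  have hg0 : g θs = 0 := my_grad_zero hgrad hmin
  set ρ : ℝ := 1 - 2 * α * (m * L / (m + L)) with hρdef
  have hρ0 : 0 ≤ ρ := by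
    have h1 : 2 * α * (m * L / (m + L)) ≤ 2 * (2 / (m + L)) * (m * L / (m + L)) := by
      apply mul_le_mul_of_nonneg_right _ (by positivity)
      linarith
    have h2 : 2 * (2 / (m + L)) * (m * L / (m + L)) = 4 * m * L / (m + L) ^ 2 := by
      field_simp; ring
    have h3 : 4 * m * L / (m + L) ^ 2 ≤ 1 := by
      rw [div_le_one (by positivity)]
      nlinarith [sq_nonneg (L - m)]
    simp only [hρdef]
    linarith
  set B : ℝ := ((m + L) / (2 * m * L * (n:ℝ))) * α * σ ^ 2 with hBdef
  have hB0 : 0 ≤ B := by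
    rw [hBdef]; positivity
  set ξ' : ℕ → Ω → EuclideanSpace ℝ (Fin d) := fun i => ((hint i).1).mk (ξ i) with hξ'def
  have hξm : ∀ i, Measurable (ξ' i) := fun i =>
    ((hint i).1).stronglyMeasurable_mk.measurable
  have hξae : ∀ i, ξ i =ᵐ[ℙ] ξ' i := fun i => ((hint i).1).ae_eq_mk
  set x' : ℕ → Ω → EuclideanSpace ℝ (Fin d) := traj α g θ0 ξ' with hx'def
  have hx'meas : ∀ t, Measurable (x' t) := traj_measurable hgc hξm
  have hxx' : ∀ t, x t =ᵐ[ℙ] x' t := by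
    intro t
    induction t with
    | zero => exact Filter.Eventually.of_forall fun ω => by rw [hinit ω]; rfl
    | succ t ih =>
      filter_upwards [ih, hξae t] with ω h1 h2
      rw [hupd t ω, h1, h2]
      rfl
  have hξ'L2 : ∀ i, MemLp (ξ' i) 2 ℙ := by
    intro i
    rw [memLp_two_iff_integrable_sq_norm (hξm i).aestronglyMeasurable]
    exact (hint2 i).congr ((hξae i).mono fun ω h => by dsimp only; rw [h])
  have hx'L2 : ∀ t, MemLp (x' t) 2 ℙ := by
    intro t
    induction t with
    | zero => exact memLp_const θ0
    | succ t ih =>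
      have hgm : MemLp (fun ω => g (x' t ω)) 2 ℙ := by
        apply MemLp.of_le_mul (c := L) (ih.sub (memLp_const θs))
          (hgc.measurable.comp (hx'meas t)).aestronglyMeasurable
        apply Filter.Eventually.of_forall
        intro ω
        have h := hlip (x' t ω) θs
        rw [hg0, sub_zero] at h
        simpa using h
      show MemLp (fun ω => x' t ω - α • (g (x' t ω) + ξ' t ω)) 2 ℙ
      exact ih.sub ((hgm.add (hξ'L2 t)).const_smul α)
  have hgL2 : ∀ t, MemLp (fun ω => g (x' t ω)) 2 ℙ := by
    intro t
    apply MemLp.of_le_mul (c := L) ((hx'L2 t).sub (memLp_const θs))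
      (hgc.measurable.comp (hx'meas t)).aestronglyMeasurable
    apply Filter.Eventually.of_forall
    intro ω
    have h := hlip (x' t ω) θs
    rw [hg0, sub_zero] at h
    simpa using h
  have hindep' : iIndepFun ξ' ℙ := my_iIndepFun_ae_eq hindep hξae
  have hIF : ∀ t, IndepFun (x' t) (ξ' t) ℙ := traj_indepFun hgc hξm hindep'
  have hξ'mean : ∀ t, ∫ ω, ξ' t ω = 0 := by
    intro t
    rw [← integral_congr_ae (hξae t)]
    exact hmean t
  have hξ'var : ∀ t, (∫ ω, ‖ξ' t ω‖ ^ 2) ≤ σ ^ 2 / (n:ℝ) := by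
    intro t
    have he : (∫ ω, ‖ξ t ω‖ ^ 2) = ∫ ω, ‖ξ' t ω‖ ^ 2 :=
      integral_congr_ae ((hξae t).mono fun ω h => by simp only [h])
    rw [← he]
    exact hvar t
  have hstep : ∀ t, (∫ ω, ‖x' (t + 1) ω - θs‖ ^ 2)
      ≤ ρ * (∫ ω, ‖x' t ω - θs‖ ^ 2) + α ^ 2 * (σ ^ 2 / (n:ℝ)) := by
    intro t
    set v : Ω → EuclideanSpace ℝ (Fin d) := fun ω => x' t ω - α • g (x' t ω) - θs with hvdef
    have hvL2 : MemLp v 2 ℙ :=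
      ((hx'L2 t).sub ((hgL2 t).const_smul α)).sub (memLp_const θs)
    have hpt : ∀ ω, ‖x' (t + 1) ω - θs‖ ^ 2
        = ‖v ω‖ ^ 2 - 2 * α * ⟪v ω, ξ' t ω⟫ + α ^ 2 * ‖ξ' t ω‖ ^ 2 := by
      intro ω
      have h1 : x' (t + 1) ω - θs = v ω - α • ξ' t ω := by
        show (x' t ω - α • (g (x' t ω) + ξ' t ω)) - θs = _
        rw [hvdef]
        simp only [smul_add]
        abel
      rw [h1, norm_sub_sq_real, real_inner_smul_right, norm_smul, Real.norm_eq_abs,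
        abs_of_nonneg hα0.le, mul_pow]
      ring
    have Iv2 : Integrable (fun ω => ‖v ω‖ ^ 2) ℙ :=
      (memLp_two_iff_integrable_sq_norm hvL2.1).1 hvL2
    have Ix2 : Integrable (fun ω => ‖x' t ω - θs‖ ^ 2) ℙ := by
      have h := (hx'L2 t).sub (memLp_const θs)
      exact (memLp_two_iff_integrable_sq_norm h.1).1 h
    have Icr : Integrable (fun ω => ⟪v ω, ξ' t ω⟫) ℙ := my_integrable_inner hvL2 (hξ'L2 t)
    have Iξ2 : Integrable (fun ω => ‖ξ' t ω‖ ^ 2) ℙ :=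
      (hint2 t).congr ((hξae t).mono fun ω h => by dsimp only; rw [h])
    have hIv : IndepFun v (ξ' t) ℙ := by
      have hrfl : v = (fun z => z - α • g z - θs) ∘ (x' t) := rfl
      rw [hrfl]
      refine (hIF t).comp ?_ measurable_id
      exact (measurable_id.sub (hgc.measurable.const_smul α)).sub measurable_const
    have hcross : (∫ ω, ⟪v ω, ξ' t ω⟫) = 0 :=
      my_cross_zero hIv hvL2 (hξ'L2 t) (hξ'mean t)
    calc (∫ ω, ‖x' (t + 1) ω - θs‖ ^ 2)
        = ∫ ω, (‖v ω‖ ^ 2 - 2 * α * ⟪v ω, ξ' t ω⟫ + α ^ 2 * ‖ξ' t ω‖ ^ 2) :=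
          integral_congr_ae (Filter.Eventually.of_forall hpt)
      _ = (∫ ω, ‖v ω‖ ^ 2) - 2 * α * (∫ ω, ⟪v ω, ξ' t ω⟫)
            + α ^ 2 * ∫ ω, ‖ξ' t ω‖ ^ 2 := by
          have Ia : Integrable (fun ω => ‖v ω‖ ^ 2 - 2 * α * ⟪v ω, ξ' t ω⟫) ℙ :=
            Iv2.sub (Icr.const_mul _)
          have Ib : Integrable (fun ω => α ^ 2 * ‖ξ' t ω‖ ^ 2) ℙ := Iξ2.const_mul _
          have Ic : Integrable (fun ω => 2 * α * ⟪v ω, ξ' t ω⟫) ℙ := Icr.const_mul _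
          rw [integral_add Ia Ib, integral_sub Iv2 Ic, integral_const_mul, integral_const_mul]
      _ = (∫ ω, ‖v ω‖ ^ 2) + α ^ 2 * ∫ ω, ‖ξ' t ω‖ ^ 2 := by
          rw [hcross]
          ring
      _ ≤ ρ * (∫ ω, ‖x' t ω - θs‖ ^ 2) + α ^ 2 * (σ ^ 2 / (n:ℝ)) := by
          have h1 : (∫ ω, ‖v ω‖ ^ 2) ≤ ∫ ω, ρ * ‖x' t ω - θs‖ ^ 2 := by
            apply integral_mono Iv2 (Ix2.const_mul ρ)
            intro ω
            exact my_contract hm hmL hα0 hα hgrad hsc hlip hmin (x' t ω)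
          rw [integral_const_mul] at h1
          have h2 : α ^ 2 * (∫ ω, ‖ξ' t ω‖ ^ 2) ≤ α ^ 2 * (σ ^ 2 / (n:ℝ)) :=
            mul_le_mul_of_nonneg_left (hξ'var t) (sq_nonneg α)
          exact add_le_add h1 h2
  have hgeom : ∀ t, (∫ ω, ‖x' t ω - θs‖ ^ 2) ≤ ρ ^ t * ‖θ0 - θs‖ ^ 2 + B := by
    intro t
    induction t with
    | zero =>
      have h0 : (∫ ω, ‖x' 0 ω - θs‖ ^ 2) = ‖θ0 - θs‖ ^ 2 := by
        have : x' 0 = fun _ : Ω => θ0 := rfl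
        rw [this]
        simp
      rw [h0]
      simp only [pow_zero, one_mul]
      linarith
    | succ t ih =>
      have h1 := hstep t
      have h2 : ρ * (∫ ω, ‖x' t ω - θs‖ ^ 2) ≤ ρ * (ρ ^ t * ‖θ0 - θs‖ ^ 2 + B) :=
        mul_le_mul_of_nonneg_left ih hρ0
      have h3 : ρ * B + α ^ 2 * (σ ^ 2 / (n:ℝ)) = B := by
        have h4 : B - ρ * B = (2 * α * (m * L / (m + L))) * B := by
          rw [hρdef]; ring
        have h5 : (2 * α * (m * L / (m + L))) * B = α ^ 2 * (σ ^ 2 / (n:ℝ)) := by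
          rw [hBdef]
          field_simp
        linarith
      calc (∫ ω, ‖x' (t + 1) ω - θs‖ ^ 2)
          ≤ ρ * (ρ ^ t * ‖θ0 - θs‖ ^ 2 + B) + α ^ 2 * (σ ^ 2 / (n:ℝ)) :=
            le_trans h1 (add_le_add_left h2 _)
        _ = ρ ^ (t + 1) * ‖θ0 - θs‖ ^ 2 + (ρ * B + α ^ 2 * (σ ^ 2 / (n:ℝ))) := by ring
        _ = ρ ^ (t + 1) * ‖θ0 - θs‖ ^ 2 + B := by rw [h3]
  intro t
  have he : (∫ ω, ‖x t ω - θs‖ ^ 2) = ∫ ω, ‖x' t ω - θs‖ ^ 2 :=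
    integral_congr_ae ((hxx' t).mono fun ω h => by simp only [h])
  rw [he]
  exact hgeom t
end
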